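/- arXiv:2010.00861 — 11 statements merged into one kernel-verified Lean document; each statement's English description precedes it below -/
import Mathlib

section
/- Suppose the basic offspring number satisfies R ≤ 1 and there are no sterile males (M_T = 0). Then the only nonnegative equilibrium of the SIT vector field is the origin: if A, M, F ≥ 0 satisfy φF = (γ+μ_{A,1}+μ_{A,2}A)A, (1−r)γA = μ_M M, and rγA = μ_F F, then A = M = F = 0. -/
/-- If the basic offspring number `R ≤ 1` and there are no sterile males (`M_T = 0`),
then the only nonnegative equilibrium of the SIT vector field is the origin. -/
theorem stmt_0 (φ γ μA1 μA2 μF μM r : ℝ)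
    (hφ : 0 < φ) (hγ : 0 < γ) (hμA1 : 0 < μA1) (hμA2 : 0 < μA2)
    (hμF : 0 < μF) (hμM : 0 < μM) (hr0 : 0 < r) (hr1 : r < 1)
    (hR : r * γ * φ / (μF * (γ + μA1)) ≤ 1)
    (A M F : ℝ) (hA : 0 ≤ A) (hM : 0 ≤ M) (hF : 0 ≤ F)
    (e1 : φ * F = (γ + μA1 + μA2 * A) * A)
    (e2 : (1 - r) * γ * A = μM * M)
    (e3 : r * γ * A = μF * F) :
    A = 0 ∧ M = 0 ∧ F = 0 := by
  have hden : 0 < μF * (γ + μA1) := by positivity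
  have hRle : r * γ * φ ≤ μF * (γ + μA1) := by
    have := (div_le_one hden).mp hR
    linarith
  have hA0 : A = 0 := by
    by_contra h
    have hApos : 0 < A := lt_of_le_of_ne hA (Ne.symm h)
    -- φ * (r * γ * A) = μF * (γ+μA1+μA2 A) * A
    have key : φ * (r * γ * A) = μF * ((γ + μA1 + μA2 * A) * A) := by
      calc φ * (r * γ * A) = φ * (μF * F) := by rw [e3]
        _ = μF * (φ * F) := by ring
        _ = μF * ((γ + μA1 + μA2 * A) * A) := by rw [e1]
    have h1 : r * γ * φ = μF * (γ + μA1 + μA2 * A) := by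
      have := mul_right_cancel₀ (ne_of_gt hApos)
        (by linarith [key] : φ * (r * γ) * A = μF * (γ + μA1 + μA2 * A) * A)
      linarith
    nlinarith [mul_pos hμF (mul_pos hμA2 hApos)]
  refine ⟨hA0, ?_, ?_⟩
  · have : μM * M = 0 := by rw [← e2, hA0]; ring
    exact (mul_eq_zero.mp this).resolve_left (ne_of_gt hμM) |>.symm ▸ rfl
  · have : μF * F = 0 := by rw [← e3, hA0]; ring
    exact (mul_eq_zero.mp this).resolve_left (ne_of_gt hμF)
end

section
/- Suppose the basic offspring number satisfies R > 1 and M_T = 0. Then the SIT vector field has exactly one equilibrium with all components positive, namely E* = (A*, M*, F*) with A* = (γ+μ_{A,1})(R−1)/μ_{A,2}, M* = (1−r)γA*/μ_M, F* = rγA*/μ_F: this triple satisfies φF* = (γ+μ_{A,1}+μ_{A,2}A*)A*, (1−r)γA* = μ_M M*, rγA* = μ_F F*, and any triple (A,M,F) with A,M,F > 0 satisfying these three equations equals (A*,M*,F*). -/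
/-- If `R > 1` and `M_T = 0`, the SIT vector field has exactly one positive equilibrium,
namely `E* = (A*, M*, F*)`. -/
theorem stmt_1 (φ γ μA1 μA2 μF μM r : ℝ)
    (hφ : 0 < φ) (hγ : 0 < γ) (hμA1 : 0 < μA1) (hμA2 : 0 < μA2)
    (hμF : 0 < μF) (hμM : 0 < μM) (hr0 : 0 < r) (hr1 : r < 1)
    (R : ℝ) (hRdef : R = r * γ * φ / (μF * (γ + μA1))) (hR : 1 < R)
    (Astar Mstar Fstar : ℝ)
    (hAs : Astar = (γ + μA1) * (R - 1) / μA2)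
    (hMs : Mstar = (1 - r) * γ * Astar / μM)
    (hFs : Fstar = r * γ * Astar / μF) :
    (0 < Astar ∧ 0 < Mstar ∧ 0 < Fstar) ∧
    (φ * Fstar = (γ + μA1 + μA2 * Astar) * Astar ∧
      (1 - r) * γ * Astar = μM * Mstar ∧
      r * γ * Astar = μF * Fstar) ∧
    (∀ A M F : ℝ, 0 < A → 0 < M → 0 < F →
      φ * F = (γ + μA1 + μA2 * A) * A →
      (1 - r) * γ * A = μM * M →
      r * γ * A = μF * F →
      A = Astar ∧ M = Mstar ∧ F = Fstar) := by
  have hsum : 0 < γ + μA1 := by linarith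
  have hR1 : 0 < R - 1 := by linarith
  have h1r : 0 < 1 - r := by linarith
  have hA : 0 < Astar := by
    rw [hAs]; exact div_pos (mul_pos hsum hR1) hμA2
  have hRkey : R * (μF * (γ + μA1)) = r * γ * φ := by
    rw [hRdef]; field_simp
  have hAkey : μA2 * Astar = (γ + μA1) * (R - 1) := by
    rw [hAs]; field_simp
  refine ⟨⟨hA, by rw [hMs]; exact div_pos (mul_pos (mul_pos h1r hγ) hA) hμM, by rw [hFs]; positivity⟩, ⟨?_, ?_, ?_⟩, ?_⟩
  · rw [hFs]
    rw [mul_div_assoc', div_eq_iff (ne_of_gt hμF)]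
    linear_combination -Astar * μF * hAkey - Astar * hRkey
  · rw [hMs]; field_simp
  · rw [hFs]; field_simp
  · intro A M F hA' hM' hF' h1 h2 h3
    have hAeq : A = Astar := by
      have hF : F = r * γ * A / μF := by field_simp; linarith
      rw [hF] at h1
      have hne : μF ≠ 0 := ne_of_gt hμF
      have h1' : φ * (r * γ * A) = (γ + μA1 + μA2 * A) * A * μF := by
        field_simp at h1; linear_combination A * h1
      have key2 : μA2 * A * (A * μF) = (γ + μA1) * (R - 1) * (A * μF) := by
        linear_combination -A * hRkey - h1'
      have key : μA2 * A = (γ + μA1) * (R - 1) :=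
        mul_right_cancel₀ (by positivity) key2
      have : μA2 * A = μA2 * Astar := by rw [hAkey]; exact key
      exact mul_left_cancel₀ (ne_of_gt hμA2) this
    refine ⟨hAeq, ?_, ?_⟩
    · rw [hMs, ← hAeq]; field_simp; linarith
    · rw [hFs, ← hAeq]; field_simp; linarith
end

section
/- Assume R > 1 and 0 < M_T < M_{T1}. Then Δ(M_T) > 0, the numbers α_± = ((R−1−Q·M_T) ± √Δ(M_T))/2 satisfy 0 < α_− < α_+, and the two triples E_1 = (A_1,M_1,F_1) and E_2 = (A_2,M_2,F_2) defined by M_1 = M_T/α_+, M_2 = M_T/α_−, A_i = μ_M M_i/((1−r)γ), F_i = (γ+μ_{A,1}+μ_{A,2}A_i)A_i/φ are equilibria of the SIT vector field H_{M_T} with 0 < A_1 < A_2, 0 < M_1 < M_2, and 0 < F_1 < F_2. -/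
set_option maxHeartbeats 1000000

lemma eq3_aux (φ γ μA1 μA2 μF μM r MT α M A F : ℝ)
    (hφ : φ ≠ 0) (hγ : (0:ℝ) < γ) (h1r : r < 1) (hαne : α ≠ 0)
    (hMden : M + MT ≠ 0)
    (hM : α * M = MT)
    (hA : A = μM * M / ((1 - r) * γ))
    (hF : F = (γ + μA1 + μA2 * A) * A / φ)
    (hpoly : r * γ * φ * ((1 - r) * γ) * α
      = μF * (γ + μA1) * ((1 - r) * γ) * (1 + α) * α + μF * μA2 * μM * MT * (1 + α)) :
    (M / (M + MT)) * r * γ * A - μF * F = 0 := by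
  have h1r' : (0:ℝ) < 1 - r := by linarith
  have hpoly2 : r * γ * φ * ((1 - r) * γ) * M
      = μF * (γ + μA1) * ((1 - r) * γ) * (M + MT) + μF * μA2 * μM * M * (M + MT) := by
    have haux : α * (r * γ * φ * ((1 - r) * γ) * M
        - (μF * (γ + μA1) * ((1 - r) * γ) * (M + MT) + μF * μA2 * μM * M * (M + MT))) = 0 := by
      linear_combination M * hpoly + (α * μF * (γ + μA1) * (1 - r) * γ - μF * μA2 * μM * M) * hM
    rcases mul_eq_zero.mp haux with h | h
    · exact absurd h hαne
    · linarith
  have hAe : A * ((1 - r) * γ) = μM * M := by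
    rw [hA]; field_simp
  have hFe : F * φ = (γ + μA1 + μA2 * A) * A := by
    rw [hF]; field_simp
  rw [sub_eq_zero, div_mul_eq_mul_div, div_mul_eq_mul_div, div_mul_eq_mul_div,
    div_eq_iff hMden]
  have hcne : ((1 - r) * γ) ^ 2 * φ ≠ 0 := by positivity
  apply mul_right_cancel₀ hcne
  linear_combination
    (M * r * γ * (1 - r) * γ * φ
      - μF * (M + MT) * ((γ + μA1) * (1 - r) * γ + μA2 * ((1 - r) * γ * A + μM * M))) * hAe
    - μF * (M + MT) * ((1 - r) * γ) ^ 2 * hFe + μM * M * hpoly2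

/-- If `R > 1` and `0 < M_T < M_{T1}` then `Δ(M_T) > 0`, `0 < α₋ < α₊`, and the two
triples `E₁ < E₂` built from `α₊` and `α₋` are positive equilibria of the SIT vector
field `H_{M_T}` with `E₁ < E₂` componentwise. -/
theorem stmt_2 (φ γ μA1 μA2 μF μM r : ℝ)
    (hφ : 0 < φ) (hγ : 0 < γ) (hμA1 : 0 < μA1) (hμA2 : 0 < μA2)
    (hμF : 0 < μF) (hμM : 0 < μM) (hr0 : 0 < r) (hr1 : r < 1)
    (R Q MT1 MT Δ αp αm M1 M2 A1 A2 F1 F2 : ℝ)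
    (hRdef : R = r * γ * φ / (μF * (γ + μA1))) (hR : 1 < R)
    (hQ : Q = μA2 * μM / ((γ + μA1) * (1 - r) * γ))
    (hMT1 : MT1 = (Real.sqrt R - 1) ^ 2 / Q)
    (hMT0 : 0 < MT) (hMTlt : MT < MT1)
    (hΔ : Δ = ((Real.sqrt R - 1) ^ 2 - Q * MT) * ((Real.sqrt R + 1) ^ 2 - Q * MT))
    (hαp : αp = ((R - 1 - Q * MT) + Real.sqrt Δ) / 2)
    (hαm : αm = ((R - 1 - Q * MT) - Real.sqrt Δ) / 2)
    (hM1 : M1 = MT / αp) (hM2 : M2 = MT / αm)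
    (hA1 : A1 = μM * M1 / ((1 - r) * γ)) (hA2 : A2 = μM * M2 / ((1 - r) * γ))
    (hF1 : F1 = (γ + μA1 + μA2 * A1) * A1 / φ)
    (hF2 : F2 = (γ + μA1 + μA2 * A2) * A2 / φ) :
    0 < Δ ∧ 0 < αm ∧ αm < αp ∧
    (φ * F1 - (γ + μA1 + μA2 * A1) * A1 = 0 ∧
      (1 - r) * γ * A1 - μM * M1 = 0 ∧
      (M1 / (M1 + MT)) * r * γ * A1 - μF * F1 = 0) ∧
    (φ * F2 - (γ + μA1 + μA2 * A2) * A2 = 0 ∧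
      (1 - r) * γ * A2 - μM * M2 = 0 ∧
      (M2 / (M2 + MT)) * r * γ * A2 - μF * F2 = 0) ∧
    (0 < A1 ∧ A1 < A2 ∧ 0 < M1 ∧ M1 < M2 ∧ 0 < F1 ∧ F1 < F2) := by
  have h1r : (0:ℝ) < 1 - r := by linarith
  have hc : (0:ℝ) < γ + μA1 := by linarith
  have hQpos : 0 < Q := by
    rw [hQ]; exact div_pos (by positivity) (by positivity)
  have hs : 0 < Q * MT := mul_pos hQpos hMT0
  have hsR : Real.sqrt R ^ 2 = R := Real.sq_sqrt (by linarith)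
  have h1R : 1 < Real.sqrt R := by nlinarith [Real.sqrt_nonneg R]
  have ha : Q * MT < (Real.sqrt R - 1) ^ 2 := by
    rw [hMT1] at hMTlt
    have := (lt_div_iff₀ hQpos).mp hMTlt
    nlinarith
  have hΔpos : 0 < Δ := by
    rw [hΔ]
    have h2 : 0 < (Real.sqrt R + 1) ^ 2 - Q * MT := by nlinarith [Real.sqrt_nonneg R]
    have h3 : 0 < (Real.sqrt R - 1) ^ 2 - Q * MT := by linarith
    exact mul_pos h3 h2
  have hΔeq : Δ = (R - 1 - Q * MT) ^ 2 - 4 * (Q * MT) := by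
    rw [hΔ]
    linear_combination (Real.sqrt R ^ 2 + R - 2 - 2 * (Q * MT)) * hsR
  have hsq : (Real.sqrt R - 1) ^ 2 = R - 2 * Real.sqrt R + 1 := by
    linear_combination hsR
  have hRs : 0 < R - 1 - Q * MT := by
    rw [hsq] at ha; linarith
  have he : Real.sqrt Δ ^ 2 = Δ := Real.sq_sqrt hΔpos.le
  have hepos : 0 < Real.sqrt Δ := Real.sqrt_pos.mpr hΔpos
  have helt : Real.sqrt Δ < R - 1 - Q * MT := by
    have h4 : Real.sqrt Δ ^ 2 < (R - 1 - Q * MT) ^ 2 := by rw [he, hΔeq]; linarith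
    exact lt_of_pow_lt_pow_left₀ 2 hRs.le h4
  have hαmpos : 0 < αm := by rw [hαm]; linarith
  have hlt : αm < αp := by rw [hαm, hαp]; linarith
  have hαppos : 0 < αp := lt_trans hαmpos hlt
  have hquadp : αp ^ 2 - (R - 1 - Q * MT) * αp + Q * MT = 0 := by
    rw [hαp]; linear_combination (1/4) * he + (1/4) * hΔeq
  have hquadm : αm ^ 2 - (R - 1 - Q * MT) * αm + Q * MT = 0 := by
    rw [hαm]; linear_combination (1/4) * he + (1/4) * hΔeq
  have hR' : R * (μF * (γ + μA1)) = r * γ * φ := by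
    rw [hRdef]; field_simp
  have hQ' : Q * ((γ + μA1) * (1 - r) * γ) = μA2 * μM := by
    rw [hQ]; field_simp
  have hpolyp : r * γ * φ * ((1 - r) * γ) * αp
      = μF * (γ + μA1) * ((1 - r) * γ) * (1 + αp) * αp + μF * μA2 * μM * MT * (1 + αp) := by
    linear_combination (-(1 - r) * γ * αp) * hR'
      + (-(μF * (γ + μA1) * (1 - r) * γ)) * hquadp + (μF * MT * (1 + αp)) * hQ'
  have hpolym : r * γ * φ * ((1 - r) * γ) * αm
      = μF * (γ + μA1) * ((1 - r) * γ) * (1 + αm) * αm + μF * μA2 * μM * MT * (1 + αm) := by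
    linear_combination (-(1 - r) * γ * αm) * hR'
      + (-(μF * (γ + μA1) * (1 - r) * γ)) * hquadm + (μF * MT * (1 + αm)) * hQ'
  have hM1pos : 0 < M1 := by rw [hM1]; positivity
  have hM2pos : 0 < M2 := by rw [hM2]; positivity
  have hM12 : M1 < M2 := by
    rw [hM1, hM2]; exact div_lt_div_of_pos_left hMT0 hαmpos hlt
  have hA1pos : 0 < A1 := by rw [hA1]; positivity
  have hA2pos : 0 < A2 := by rw [hA2]; positivity
  have hA12 : A1 < A2 := by
    rw [hA1, hA2]; gcongr
  have hF1pos : 0 < F1 := by rw [hF1]; positivity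
  have hF2pos : 0 < F2 := by rw [hF2]; positivity
  have hF12 : F1 < F2 := by
    rw [hF1, hF2]
    have h6 : γ + μA1 + μA2 * A1 ≤ γ + μA1 + μA2 * A2 := by
      have := mul_le_mul_of_nonneg_left hA12.le hμA2.le
      linarith
    have h5 : (γ + μA1 + μA2 * A1) * A1 < (γ + μA1 + μA2 * A2) * A2 :=
      mul_lt_mul' h6 hA12 hA1pos.le (by positivity)
    exact (div_lt_div_iff_of_pos_right hφ).mpr h5
  have hφne : φ ≠ 0 := ne_of_gt hφ
  have hγne : γ ≠ 0 := ne_of_gt hγ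
  have h1rne : (1:ℝ) - r ≠ 0 := ne_of_gt h1r
  have hαpMT : αp * M1 = MT := by rw [hM1]; field_simp
  have hαmMT : αm * M2 = MT := by rw [hM2]; field_simp
  refine ⟨hΔpos, hαmpos, hlt, ⟨?_, ?_, ?_⟩, ⟨?_, ?_, ?_⟩, hA1pos, hA12, hM1pos, hM12, hF1pos, hF12⟩
  · rw [hF1]; field_simp; ring
  · rw [hA1]; field_simp; ring
  · exact eq3_aux φ γ μA1 μA2 μF μM r MT αp M1 A1 F1 hφne hγ hr1 (ne_of_gt hαppos)
      (by positivity) hαpMT hA1 hF1 hpolyp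
  · rw [hF2]; field_simp; ring
  · rw [hA2]; field_simp; ring
  · exact eq3_aux φ γ μA1 μA2 μF μM r MT αm M2 A2 F2 hφne hγ hr1 (ne_of_gt hαmpos)
      (by positivity) hαmMT hA2 hF2 hpolym
end

section
/- Assume R > 1 and M_T > M_{T1}. Then the SIT vector field H_{M_T} has no positive equilibrium: there is no triple (A,M,F) with A > 0, M > 0, F > 0 satisfying φF = (γ+μ_{A,1}+μ_{A,2}A)A, (1−r)γA = μ_M M, and (M/(M+M_T))rγA = μ_F F. -/
set_option maxHeartbeats 1000000 in
/-- If `R > 1` and `M_T > M_{T1}`, the SIT vector field `H_{M_T}` has no positive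
equilibrium. -/
theorem stmt_3 (φ γ μA1 μA2 μF μM r : ℝ)
    (hφ : 0 < φ) (hγ : 0 < γ) (hμA1 : 0 < μA1) (hμA2 : 0 < μA2)
    (hμF : 0 < μF) (hμM : 0 < μM) (hr0 : 0 < r) (hr1 : r < 1)
    (R Q MT1 MT : ℝ)
    (hRdef : R = r * γ * φ / (μF * (γ + μA1))) (hR : 1 < R)
    (hQ : Q = μA2 * μM / ((γ + μA1) * (1 - r) * γ))
    (hMT1 : MT1 = (Real.sqrt R - 1) ^ 2 / Q)
    (hMT : MT1 < MT) :
    ¬ ∃ A M F : ℝ, 0 < A ∧ 0 < M ∧ 0 < F ∧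
      φ * F = (γ + μA1 + μA2 * A) * A ∧
      (1 - r) * γ * A = μM * M ∧
      (M / (M + MT)) * r * γ * A = μF * F := by
  rintro ⟨A, M, F, hA, hM, hF, e1, e2, e3⟩
  set c : ℝ := γ + μA1 with hc_def
  have hc : 0 < c := by positivity
  have h1r : 0 < 1 - r := by linarith
  have hQpos : 0 < Q := by rw [hQ]; positivity
  -- sqrt facts
  set t : ℝ := Real.sqrt R with ht_def
  have ht2 : t ^ 2 = R := Real.sq_sqrt (by linarith)
  have ht1 : 1 < t := by nlinarith [Real.sqrt_nonneg R]
  have hMT1pos : 0 < MT1 := by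
    rw [hMT1]; apply div_pos; nlinarith; exact hQpos
  have hMTpos : 0 < MT := lt_trans hMT1pos hMT
  have hQMT : (t - 1) ^ 2 < Q * MT := by
    have := (div_lt_iff₀ hQpos).mp (hMT1 ▸ hMT)
    linarith [this]
  clear_value t
  -- rγφ = R μF c
  have hRγφ : r * γ * φ = R * (μF * c) := by
    rw [hRdef]
    field_simp
  -- Q * D = μA2 * μM
  have hQD : Q * (c * (1 - r) * γ) = μA2 * μM := by
    rw [hQ]
    field_simp
  clear_value c
  -- Derive the main polynomial equation
  have hMMT : 0 < M + MT := by linarith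
  have e3' : M * (r * γ * A) = μF * F * (M + MT) := by
    field_simp at e3
    linarith [e3]
  -- multiply by φ and μM, substitute
  have key : (1 - r) * γ * A * (r * γ * A * φ) =
      μF * ((c + μA2 * A) * A) * ((1 - r) * γ * A + μM * MT) := by
    calc (1 - r) * γ * A * (r * γ * A * φ)
        = (μM * M) * (r * γ * A * φ) := by rw [← e2]
      _ = μM * φ * (M * (r * γ * A)) := by ring
      _ = μM * φ * (μF * F * (M + MT)) := by rw [e3']
      _ = μF * (φ * F) * (μM * M + μM * MT) := by ring
      _ = μF * ((c + μA2 * A) * A) * ((1 - r) * γ * A + μM * MT) := by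
          rw [e1, ← e2]
  -- cancel μF and A : R * c * (1-r) * γ * A = (c + μA2 A)((1-r)γA + μM MT)
  have key2 : R * (c * (1 - r) * γ) * A = (c + μA2 * A) * ((1 - r) * γ * A + μM * MT) := by
    have keyA : μF * A * (R * (c * (1 - r) * γ) * A) =
        μF * A * ((c + μA2 * A) * ((1 - r) * γ * A + μM * MT)) := by
      linear_combination key - (1 - r) * γ * A ^ 2 * hRγφ
    have hmul : μF * A ≠ 0 := by positivity
    exact mul_left_cancel₀ hmul keyA
  -- rewrite: (R - 1 - Q*MT) * D * A = x + y with x*y = Q*MT*D²*A²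
  set D : ℝ := c * (1 - r) * γ with hD_def
  set x : ℝ := c * μM * MT with hx_def
  set y : ℝ := μA2 * (1 - r) * γ * A ^ 2 with hy_def
  have hDpos : 0 < D := by rw [hD_def]; positivity
  have hx : 0 < x := by rw [hx_def]; positivity
  have hy : 0 < y := by rw [hy_def]; positivity
  have key3 : (R - 1 - Q * MT) * D * A = x + y := by
    rw [hD_def, hx_def, hy_def]
    linear_combination key2 - MT * A * hQD
  have hxy : x * y = Q * MT * (D * A) ^ 2 := by
    rw [hD_def, hx_def, hy_def]
    linear_combination MT * ((1 - r) * γ * c * A ^ 2) * hQD.symm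
  clear_value D x y
  -- contradiction
  have hu : 0 < (R - 1 - Q * MT) * D * A := by rw [key3]; linarith
  have hu2 : ((R - 1 - Q * MT) * D * A) ^ 2 ≥ 4 * (Q * MT) * (D * A) ^ 2 := by
    rw [key3]
    have hexp : (x + y) ^ 2 = (x - y) ^ 2 + 4 * (x * y) := by ring
    rw [hexp, hxy]
    linarith [sq_nonneg (x - y)]
  have hDA : 0 < D * A := mul_pos hDpos hA
  have hu' : 0 < R - 1 - Q * MT := by
    by_contra h
    push_neg at h
    have hle : (R - 1 - Q * MT) * D * A ≤ 0 :=
      mul_nonpos_of_nonpos_of_nonneg (mul_nonpos_of_nonpos_of_nonneg h hDpos.le) hA.le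
    linarith
  have h2 : 0 < (D * A) ^ 2 := by positivity
  have hu2' : 4 * (Q * MT) * (D * A) ^ 2 ≤ (R - 1 - Q * MT) ^ 2 * (D * A) ^ 2 := by
    have h3 : (R - 1 - Q * MT) ^ 2 * (D * A) ^ 2 = ((R - 1 - Q * MT) * D * A) ^ 2 := by ring
    rw [h3]; exact hu2
  have hsq : 4 * (Q * MT) ≤ (R - 1 - Q * MT) ^ 2 := le_of_mul_le_mul_right hu2' h2
  -- but Q*MT > (t-1)^2 with t^2 = R, t > 1 forces contradiction
  have hq1 : 0 < Q * MT - (t - 1) ^ 2 := by linarith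
  clear key key2 key3 hxy e1 e2 e3 e3' hRdef hQ hRγφ hQD hMT1 hMT hu hu2 hu2'
  clear hx hy hDpos hDA h2 hM hF hA hMMT
  clear hD_def hx_def hy_def
  clear D x y A M F
  have hqlt : Q * MT < t ^ 2 - 1 := by
    have := ht2
    linarith
  have hq2 : 0 < (t + 1) ^ 2 - Q * MT := by nlinarith [ht1, hqlt]
  have hsq' : 4 * (Q * MT) ≤ (t ^ 2 - 1 - Q * MT) ^ 2 := by rw [ht2]; exact hsq
  nlinarith [mul_pos hq1 hq2, hsq']
end

section
/- Assume R > 1 and M_T = M_{T1}. Then the SIT vector field H_{M_T} has exactly one positive equilibrium E_† = (A_†, M_†, F_†): the triple with M_† = M_{T1}/α, α = (R−1−Q·M_{T1})/2, A_† = μ_M M_†/((1−r)γ), F_† = (γ+μ_{A,1}+μ_{A,2}A_†)A_†/φ satisfies the equilibrium equations with all components positive, and any positive solution of the equilibrium equations equals this triple. -/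
/-- If `R > 1` and `M_T = M_{T1}`, the SIT vector field `H_{M_T}` has exactly one
positive equilibrium `E† = (A†, M†, F†)`. -/
theorem stmt_4 (φ γ μA1 μA2 μF μM r : ℝ)
    (hφ : 0 < φ) (hγ : 0 < γ) (hμA1 : 0 < μA1) (hμA2 : 0 < μA2)
    (hμF : 0 < μF) (hμM : 0 < μM) (hr0 : 0 < r) (hr1 : r < 1)
    (R Q MT1 α Adag Mdag Fdag : ℝ)
    (hRdef : R = r * γ * φ / (μF * (γ + μA1))) (hR : 1 < R)
    (hQ : Q = μA2 * μM / ((γ + μA1) * (1 - r) * γ))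
    (hMT1 : MT1 = (Real.sqrt R - 1) ^ 2 / Q)
    (hα : α = (R - 1 - Q * MT1) / 2)
    (hMdag : Mdag = MT1 / α)
    (hAdag : Adag = μM * Mdag / ((1 - r) * γ))
    (hFdag : Fdag = (γ + μA1 + μA2 * Adag) * Adag / φ) :
    (0 < Adag ∧ 0 < Mdag ∧ 0 < Fdag) ∧
    (φ * Fdag = (γ + μA1 + μA2 * Adag) * Adag ∧
      (1 - r) * γ * Adag = μM * Mdag ∧
      (Mdag / (Mdag + MT1)) * r * γ * Adag = μF * Fdag) ∧
    (∀ A M F : ℝ, 0 < A → 0 < M → 0 < F →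
      φ * F = (γ + μA1 + μA2 * A) * A →
      (1 - r) * γ * A = μM * M →
      (M / (M + MT1)) * r * γ * A = μF * F →
      A = Adag ∧ M = Mdag ∧ F = Fdag) := by
  have h1r : 0 < 1 - r := by linarith
  have hγμ : 0 < γ + μA1 := by linarith
  have hQpos : 0 < Q := by rw [hQ]; positivity
  have hR0 : 0 < R := by linarith
  set s := Real.sqrt R with hsdef
  have hss : s ^ 2 = R := Real.sq_sqrt hR0.le
  have hs0 : 0 ≤ s := Real.sqrt_nonneg R
  have hs1 : 1 < s := by nlinarith
  have hs1' : s - 1 ≠ 0 := by linarith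
  have hQMT1 : Q * MT1 = (s - 1) ^ 2 := by
    rw [hMT1]; field_simp
  have hαval : α = s - 1 := by
    rw [hα, hQMT1, ← hss]; ring
  have hαpos : 0 < α := by rw [hαval]; linarith
  have hMT1pos : 0 < MT1 := by nlinarith [sq_nonneg (s - 1)]
  have hMdageq : Mdag = (s - 1) / Q := by
    rw [hMdag, hαval, hMT1]
    field_simp
  have hMdagval : Q * Mdag = s - 1 := by
    rw [hMdageq]; field_simp
  have hMdagpos : 0 < Mdag := by
    rw [hMdageq]; exact div_pos (by linarith) hQpos
  have hAdagpos : 0 < Adag := by rw [hAdag]; positivity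
  have hFdagpos : 0 < Fdag := by rw [hFdag]; positivity
  have hRrel : r * γ * φ = R * (μF * (γ + μA1)) := by
    rw [hRdef]; field_simp
  have hQ' : Q * ((γ + μA1) * (1 - r) * γ) = μA2 * μM := by
    rw [hQ]; field_simp
  have hQAdag : μA2 * Adag = Q * (γ + μA1) * Mdag := by
    have h : ((1 - r) * γ) * (μA2 * Adag) = ((1 - r) * γ) * (Q * (γ + μA1) * Mdag) := by
      rw [hAdag]
      field_simp
      linear_combination (-1) * hQ'
    exact mul_left_cancel₀ (by positivity) h
  have hsumpos : 0 < Mdag + MT1 := by linarith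
  have hkey : Mdag * R = (Mdag + MT1) * (1 + Q * Mdag) := by
    rw [hMdageq, hMT1, ← hss]
    field_simp
    ring
  refine ⟨⟨hAdagpos, hMdagpos, hFdagpos⟩, ⟨?_, ?_, ?_⟩, ?_⟩
  · rw [hFdag]; field_simp
  · rw [hAdag]; field_simp
  · rw [hFdag]
    field_simp
    linear_combination Mdag * hRrel + μF * (γ + μA1) * hkey
      - μF * (Mdag + MT1) * hQAdag
  · rintro A M F hA hM hF e1 e2 e3
    have hMT : (0:ℝ) < M + MT1 := by linarith
    have e3' : M * (r * γ * A) = μF * F * (M + MT1) := by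
      rw [div_mul_eq_mul_div, div_mul_eq_mul_div, div_mul_eq_mul_div,
        div_eq_iff hMT.ne'] at e3
      linear_combination e3
    have hQA : μA2 * A = Q * (γ + μA1) * M := by
      have h : ((1 - r) * γ) * (μA2 * A) = ((1 - r) * γ) * (Q * (γ + μA1) * M) := by
        linear_combination μA2 * e2 - M * hQ'
      exact mul_left_cancel₀ (by positivity) h
    have h4 : A * (M * r * γ * φ) = A * (μF * (γ + μA1 + μA2 * A) * (M + MT1)) := by
      linear_combination φ * e3' + μF * (M + MT1) * e1
    have hc := mul_left_cancel₀ hA.ne' h4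
    have h5' : (μF * (γ + μA1)) * (R * M) = (μF * (γ + μA1)) * ((1 + Q * M) * (M + MT1)) := by
      linear_combination hc - M * hRrel + μF * (M + MT1) * hQA
    have h5 := mul_left_cancel₀ (by positivity : (μF * (γ + μA1)) ≠ 0) h5'
    have hsq : (Q * M - (s - 1)) ^ 2 = 0 := by
      linear_combination (-Q) * h5 - (1 + Q * M) * hQMT1 + (-Q * M) * hss
    have hQM : Q * M = s - 1 := by
      have := pow_eq_zero_iff (n := 2) (by norm_num) |>.mp hsq
      linarith
    have hMeq : M = Mdag := by
      have : Q * M = Q * Mdag := by rw [hQM, hMdagval]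
      exact mul_left_cancel₀ hQpos.ne' this
    have hAeq : A = Adag := by
      rw [hAdag, ← hMeq, ← e2]
      field_simp
    have hFeq : F = Fdag := by
      rw [hFdag, ← hAeq, ← e1]
      field_simp
    exact ⟨hAeq, hMeq, hFeq⟩
end

section
/- (Theorem 2.1, item 1.) Assume R > 1 and M_T > M_{T1}. Then the elimination equilibrium 0 is globally asymptotically attracting on the nonnegative orthant: every differentiable function w = (A,M,F) : [0,∞) → ℝ³ with w(t) ≥ 0 componentwise for all t ≥ 0 and w'(t) = H_{M_T}(w(t)) for all t ≥ 0 satisfies w(t) → (0,0,0) as t → ∞. -/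
open Set Filter

lemma sit_barrier (f g : ℝ → ℝ) (T β δ : ℝ) (hT : 0 ≤ T) (hδ : 0 < δ)
    (hf : ∀ t, 0 ≤ t → HasDerivWithinAt f (g t) (Set.Ici (0:ℝ)) t)
    (hnn : ∀ t, 0 ≤ t → 0 ≤ f t)
    (hdec : ∀ t, T ≤ t → β ≤ f t → g t ≤ -δ) :
    ∃ T', T ≤ T' ∧ ∀ t, T' ≤ t → f t ≤ β := by
  have hcont : ContinuousOn f (Set.Ici (0:ℝ)) := fun t ht => (hf t ht).continuousWithinAt
  have hderiv : ∀ x : ℝ, 0 < x → HasDerivAt f (g x) x := fun x hx =>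
    (hf x hx.le).hasDerivAt (Ici_mem_nhds hx)
  -- phase 1: there is a point where f ≤ β
  have phase1 : ∃ t₀, T ≤ t₀ ∧ f t₀ ≤ β := by
    by_contra h
    push_neg at h
    -- f > β on [T, ∞), so h₁ := f + (δ/2) t is strictly antitone on Ici T
    have hanti : StrictAntiOn (fun t => f t + (δ/2) * t) (Set.Ici T) := by
      apply strictAntiOn_of_deriv_neg (convex_Ici T)
      · exact ((hcont.mono (Ici_subset_Ici.2 hT)).add
          ((continuous_const.mul continuous_id).continuousOn))
      · intro x hx
        rw [interior_Ici] at hx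
        have hx0 : 0 < x := lt_of_le_of_lt hT hx
        have hd : HasDerivAt (fun t => f t + (δ/2) * t) (g x + δ/2) x := by
          exact ((hderiv x hx0).add ((hasDerivAt_id x).const_mul (δ/2))).congr_deriv (by ring)
        rw [hd.deriv]
        have := hdec x (le_of_lt hx) (h x (le_of_lt hx)).le
        linarith
    obtain ⟨t1, ht1⟩ : ∃ t1, t1 = T + (f T + 1) / (δ/2) := ⟨_, rfl⟩
    have hfT : 0 ≤ f T := hnn T hT
    have hpos : 0 < (f T + 1) / (δ/2) := by positivity
    have hTt1 : T < t1 := by rw [ht1]; linarith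
    have := hanti (self_mem_Ici) (le_of_lt hTt1 : T ≤ t1) hTt1
    have hft1 : 0 ≤ f t1 := hnn t1 (le_trans hT hTt1.le)
    have : f t1 + (δ/2) * (T + (f T + 1)/(δ/2)) < f T + (δ/2) * T := by
      rw [ht1] at this ⊢; simpa using this
    have hne : (δ/2) ≠ 0 := by positivity
    rw [mul_add, mul_div_cancel₀ _ hne] at this
    linarith
  obtain ⟨t₀, hTt₀, hft₀⟩ := phase1
  refine ⟨t₀, hTt₀, fun t1 ht1 => ?_⟩
  by_contra hgt
  push_neg at hgt
  have ht₀0 : (0:ℝ) ≤ t₀ := le_trans hT hTt₀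
  have ht₀t1 : t₀ < t1 := by
    rcases eq_or_lt_of_le ht1 with h | h
    · exact absurd (h ▸ hft₀) (not_le.2 hgt)
    · exact h
  set S := Set.Icc t₀ t1 ∩ f ⁻¹' (Set.Iic β) with hS
  have hScl : IsClosed S :=
    (hcont.mono (fun x hx => le_trans ht₀0 hx.1 : Set.Icc t₀ t1 ⊆ Set.Ici 0)).preimage_isClosed_of_isClosed
      isClosed_Icc isClosed_Iic
  have hSne : S.Nonempty := ⟨t₀, ⟨le_refl _, ht₀t1.le⟩, hft₀⟩
  have hSbdd : BddAbove S := ⟨t1, fun x hx => hx.1.2⟩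
  set s := sSup S with hs
  have hsS : s ∈ S := hScl.csSup_mem hSne hSbdd
  have hst1 : s < t1 := lt_of_le_of_ne hsS.1.2 (fun h => absurd (h ▸ hsS.2) (not_le.2 hgt))
  have hover : ∀ u, s < u → u ≤ t1 → β < f u := by
    intro u hsu hut1
    by_contra hle
    push_neg at hle
    exact absurd (le_csSup hSbdd ⟨⟨le_trans hsS.1.1 hsu.le, hut1⟩, hle⟩) (not_le.2 hsu)
  have hanti2 : StrictAntiOn f (Set.Icc s t1) := by
    apply strictAntiOn_of_deriv_neg (convex_Icc s t1)
    · exact hcont.mono (fun x hx => le_trans (le_trans ht₀0 hsS.1.1) hx.1)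
    · intro x hx
      rw [interior_Icc] at hx
      have hx0 : 0 < x := lt_of_le_of_lt (le_trans ht₀0 hsS.1.1) hx.1
      rw [(hderiv x hx0).deriv]
      have hfx := hover x hx.1 hx.2.le
      have := hdec x (le_trans (le_trans hTt₀ hsS.1.1) hx.1.le) hfx.le
      linarith
  have := hanti2 ⟨le_refl _, hst1.le⟩ ⟨hst1.le, le_refl _⟩ hst1
  have : f t1 < f s := this
  have : f t1 ≤ β := le_trans this.le hsS.2
  linarith

lemma sit_key_alg (q k sR s u θ : ℝ) (hq : 0 < q) (hk : 0 < k)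
    (hsR : 1 < sR) (hs : sR - 1 < s) (hs0 : 0 ≤ s) (hqk : s^2 = q*k)
    (hθ : θ = sR/(1+s)) (hu : u^2 = θ) (hu0 : 0 ≤ u) :
    ∀ a, 0 ≤ a → sR^2 * a ≤ θ*(a+k) + q*θ^2*a*(a+k) := by
  have h1s : (0:ℝ) < 1 + s := by linarith
  have hθ1 : θ < 1 := by rw [hθ, div_lt_one h1s]; linarith
  have hu1 : u ≤ 1 := by nlinarith
  have hsReq : sR = u^2 * (1+s) := by rw [hu, hθ]; field_simp
  intro a ha
  have h5 : q*u^4*a^2*k = s^2*(u^4*a^2) := by rw [hqk]; ring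
  have hAk : 2*(u^3*s*a)*k ≤ (q*u^4*a^2 + u^2*k)*k := by
    nlinarith [h5, mul_nonneg (sq_nonneg u) (sq_nonneg (s*u*a - k))]
  have hA : 2*(u^3*s*a) ≤ q*u^4*a^2 + u^2*k := le_of_mul_le_mul_right hAk hk
  have hB : sR^2 ≤ u^2*(1+u*s)^2 := by
    rw [hsReq]
    nlinarith [mul_nonneg (mul_nonneg (sq_nonneg u) (by linarith : (0:ℝ) ≤ 1 - u))
      (by nlinarith : (0:ℝ) ≤ 1 + u + 2*u*s)]
  have h6 : q*k*(u^4*a) = s^2*(u^4*a) := by rw [hqk]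
  rw [← hu]
  nlinarith [mul_le_mul_of_nonneg_right hB ha, hA, h6]

set_option maxHeartbeats 1000000 in
/-- (Theorem 2.1, item 1.) If `R > 1` and `M_T > M_{T1}`, then the elimination
equilibrium `0` attracts every nonnegative solution of the SIT ODE. -/
theorem stmt_5 (φ γ μA1 μA2 μF μM r : ℝ)
    (hφ : 0 < φ) (hγ : 0 < γ) (hμA1 : 0 < μA1) (hμA2 : 0 < μA2)
    (hμF : 0 < μF) (hμM : 0 < μM) (hr0 : 0 < r) (hr1 : r < 1)
    (R Q MT1 MT : ℝ)
    (hRdef : R = r * γ * φ / (μF * (γ + μA1))) (hR : 1 < R)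
    (hQ : Q = μA2 * μM / ((γ + μA1) * (1 - r) * γ))
    (hMT1 : MT1 = (Real.sqrt R - 1) ^ 2 / Q)
    (hMT : MT1 < MT)
    (A M F : ℝ → ℝ)
    (hnn : ∀ t, 0 ≤ t → 0 ≤ A t ∧ 0 ≤ M t ∧ 0 ≤ F t)
    (hA' : ∀ t, 0 ≤ t → HasDerivWithinAt A
      (φ * F t - (γ + μA1 + μA2 * A t) * A t) (Set.Ici (0 : ℝ)) t)
    (hM' : ∀ t, 0 ≤ t → HasDerivWithinAt M
      ((1 - r) * γ * A t - μM * M t) (Set.Ici (0 : ℝ)) t)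
    (hF' : ∀ t, 0 ≤ t → HasDerivWithinAt F
      ((M t / (M t + MT)) * r * γ * A t - μF * F t) (Set.Ici (0 : ℝ)) t) :
    Filter.Tendsto (fun t => (A t, M t, F t)) Filter.atTop
      (nhds ((0 : ℝ), (0 : ℝ), (0 : ℝ))) := by
  have hA0 : ∀ t, 0 ≤ t → 0 ≤ A t := fun t ht => (hnn t ht).1
  have hM0 : ∀ t, 0 ≤ t → 0 ≤ M t := fun t ht => (hnn t ht).2.1
  have hF0 : ∀ t, 0 ≤ t → 0 ≤ F t := fun t ht => (hnn t ht).2.2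
  have hb1 : (0:ℝ) < γ + μA1 := by linarith only [hγ, hμA1]
  have h1r : (0:ℝ) < 1 - r := by linarith only [hr1]
  have hQpos : 0 < Q := by
    rw [hQ]; exact div_pos (by positivity) (by positivity)
  have hsR1 : 1 < Real.sqrt R := (Real.lt_sqrt (by norm_num)).2 (by simpa using hR)
  have hMT1pos : 0 < MT1 := by
    rw [hMT1]; exact div_pos (pow_pos (by linarith only [hsR1]) 2) hQpos
  have hMTpos : 0 < MT := lt_trans hMT1pos hMT
  have hQMT : (Real.sqrt R - 1)^2 < Q*MT := by
    rw [hMT1, div_lt_iff₀ hQpos] at hMT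
    linarith only [hMT, mul_comm MT Q]
  obtain ⟨s, hs_def⟩ : ∃ s, s = Real.sqrt (Q*MT) := ⟨_, rfl⟩
  have hs0 : 0 ≤ s := hs_def ▸ Real.sqrt_nonneg _
  have hsRs : Real.sqrt R - 1 < s := by
    have h := Real.sqrt_lt_sqrt (sq_nonneg (Real.sqrt R - 1)) hQMT
    rwa [Real.sqrt_sq (by linarith only [hsR1]), ← hs_def] at h
  have hs2 : s^2 = Q*MT := by
    rw [hs_def]; exact Real.sq_sqrt (by positivity)
  obtain ⟨k, hk_def⟩ : ∃ k, k = μM * MT / ((1-r)*γ) := ⟨_, rfl⟩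
  have hk : 0 < k := by rw [hk_def]; exact div_pos (by positivity) (by positivity)
  obtain ⟨q, hq_def⟩ : ∃ q, q = μA2 / (γ+μA1) := ⟨_, rfl⟩
  have hq : 0 < q := hq_def ▸ div_pos hμA2 hb1
  have hqb1 : q * (γ+μA1) = μA2 := by rw [hq_def]; field_simp
  have hqk : s^2 = q*k := by
    rw [hs2, hq_def, hk_def, hQ]; field_simp
  obtain ⟨θ, hθ_def⟩ : ∃ θ, θ = Real.sqrt R/(1+s) := ⟨_, rfl⟩
  have hθpos : 0 < θ := hθ_def ▸ div_pos (by linarith only [hsR1]) (by linarith only [hs0])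
  have hθ1 : θ < 1 := by
    rw [hθ_def, div_lt_one (by linarith only [hs0])]
    linarith only [hsRs]
  have hu2 : (Real.sqrt θ)^2 = θ := Real.sq_sqrt hθpos.le
  have hkey := sit_key_alg q k (Real.sqrt R) s (Real.sqrt θ) θ hq hk hsR1 hsRs hs0 hqk
    hθ_def hu2 (Real.sqrt_nonneg _)
  have hR2 : (Real.sqrt R)^2 = R := Real.sq_sqrt (by linarith only [hR])
  have hRγφ : r*γ*φ = R*(μF*(γ+μA1)) := by rw [hRdef]; field_simp
  have hkey2 : ∀ a, 0 ≤ a →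
      φ*r*γ*a^2 ≤ ((γ+μA1)*θ*a + μA2*θ^2*a^2)*(μF*(a+k)) := by
    intro a ha
    have h := hkey a ha
    have hc : (0:ℝ) ≤ μF*(γ+μA1)*a := by positivity
    have h2 := mul_le_mul_of_nonneg_left h hc
    have E1 : φ*r*γ*a^2 = μF*(γ+μA1)*a*((Real.sqrt R)^2*a) := by
      rw [hR2]; linear_combination a^2 * hRγφ
    have E2 : μF*(γ+μA1)*a*(θ*(a+k) + q*θ^2*a*(a+k))
        = ((γ+μA1)*θ*a + μA2*θ^2*a^2)*(μF*(a+k)) := by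
      linear_combination (μF*θ^2*a^2*(a+k)) * hqb1
    linarith only [E1, E2, h2]
  obtain ⟨θ', hθ'_def⟩ : ∃ θ', θ' = (1+θ)/2 := ⟨_, rfl⟩
  have hθ'1 : θ' < 1 := by rw [hθ'_def]; linarith only [hθ1]
  have hθθ' : θ < θ' := by rw [hθ'_def]; linarith only [hθ1]
  have hθ'pos : 0 < θ' := by rw [hθ'_def]; linarith only [hθpos]
  have hgap : 0 < θ' - θ := by linarith only [hθθ']
  -- initial eventual bound on A
  obtain ⟨a₀, ha₀pos, hstart'⟩ :
      ∃ a₀, 0 < a₀ ∧ ∃ T, 0 ≤ T ∧ ∀ t, T ≤ t → A t ≤ a₀ := by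
    obtain ⟨η, hη_def⟩ : ∃ η, η = 2*φ/μF := ⟨_, rfl⟩
    have hηpos : 0 < η := by rw [hη_def]; positivity
    obtain ⟨C, hC_def⟩ : ∃ C, C = (η*r*γ + μF/2)^2/(4*μA2) := ⟨_, rfl⟩
    have hCpos : 0 ≤ C := by rw [hC_def]; positivity
    obtain ⟨T, hT0, hT⟩ := sit_barrier (fun t => A t + η * F t)
      (fun t => (φ * F t - (γ + μA1 + μA2 * A t) * A t) +
          η * ((M t / (M t + MT)) * r * γ * A t - μF * F t))
      0 (C/(μF/2) + 1) (μF/2) le_rfl (by positivity)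
      (fun t ht => (hA' t ht).add ((hF' t ht).const_mul η))
      (fun t ht => by
        have h1 := hA0 t ht; have h2 := hF0 t ht; positivity)
      (by
        intro t ht hge
        beta_reduce at hge ⊢
        have hAt := hA0 t ht
        have hMt := hM0 t ht
        have hFt := hF0 t ht
        have hfrac1 : M t / (M t + MT) ≤ 1 := by
          rw [div_le_one (by linarith only [hMt, hMTpos])]
          linarith only [hMt, hMTpos]
        have h3 : η * ((M t / (M t + MT)) * r * γ * A t) ≤ η * (r * γ * A t) := by
          apply mul_le_mul_of_nonneg_left _ hηpos.le
          have h := mul_le_mul_of_nonneg_right (mul_le_mul_of_nonneg_right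
            (mul_le_mul_of_nonneg_right hfrac1 hr0.le) hγ.le) hAt
          linarith only [h]
        have h5 : μA2*(A t)^2 ≤ (γ + μA1 + μA2*A t)*A t := by
          have := mul_nonneg hb1.le hAt
          nlinarith only [this, hAt, hμA2]
        have h4 : (η*r*γ + μF/2)*A t - μA2*(A t)^2 ≤ C := by
          rw [hC_def, le_div_iff₀ (by positivity)]
          nlinarith only [sq_nonneg (η*r*γ + μF/2 - 2*μA2*(A t))]
        have hge2 : C + μF/2 ≤ (μF/2)*(A t + η*F t) := by
          have h := mul_le_mul_of_nonneg_left hge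
            (le_of_lt (show (0:ℝ) < μF/2 by positivity))
          have he : (μF/2)*(C/(μF/2)+1) = C + μF/2 := by field_simp
          linarith only [h, he]
        have hημF : η * μF = 2*φ := by rw [hη_def]; field_simp
        have h6 : (μF/2)*(η*F t) = φ*F t := by linear_combination (F t/2)*hημF
        linarith only [h3, h5, h4, hge2, h6])
    refine ⟨C/(μF/2) + 1, by positivity, T, hT0, fun t ht => ?_⟩
    have h1 := hT t ht
    have h2 : 0 ≤ η * F t := mul_nonneg hηpos.le (hF0 t (le_trans hT0 ht))
    linarith only [h1, h2]
  -- contraction step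
  have hstep : ∀ a, 0 < a → (∃ T, 0 ≤ T ∧ ∀ t, T ≤ t → A t ≤ a) →
      ∃ T, 0 ≤ T ∧ ∀ t, T ≤ t → A t ≤ θ'*a := by
    rintro a ha ⟨TA, hTA0, hTA⟩
    obtain ⟨εM, hεM_def⟩ : ∃ e, e = (γ+μA1)*(θ'-θ)*μF*MT/(4*φ*r*γ) := ⟨_, rfl⟩
    have hεM : 0 < εM := by
      rw [hεM_def]
      exact div_pos (mul_pos (mul_pos (mul_pos hb1 hgap) hμF) hMTpos) (by positivity)
    obtain ⟨m, hm_def⟩ : ∃ m, m = (1-r)*γ*a/μM := ⟨_, rfl⟩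
    have hmpos : 0 < m := by rw [hm_def]; exact div_pos (by positivity) hμM
    obtain ⟨βM, hβM_def⟩ : ∃ b, b = m + εM := ⟨_, rfl⟩
    have hβMpos : 0 < βM := by rw [hβM_def]; linarith only [hmpos, hεM]
    obtain ⟨TM, hTMge, hTM⟩ := sit_barrier M (fun t => (1 - r) * γ * A t - μM * M t)
      TA βM (μM*εM) hTA0 (by positivity) hM' hM0 (by
        intro t ht hge
        beta_reduce at hge ⊢
        have h1 : (1-r)*γ*(A t) ≤ (1-r)*γ*a :=
          mul_le_mul_of_nonneg_left (hTA t ht) (by positivity)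
        have h2 : μM*βM = (1-r)*γ*a + μM*εM := by
          rw [hβM_def, hm_def]; field_simp
        have h3 := mul_le_mul_of_nonneg_left hge hμM.le
        linarith only [h1, h2, h3])
    have hTM0 : 0 ≤ TM := le_trans hTA0 hTMge
    obtain ⟨εF, hεF_def⟩ : ∃ e, e = (γ+μA1)*(θ'-θ)*a/(4*φ) := ⟨_, rfl⟩
    have hεF : 0 < εF := by
      rw [hεF_def]; exact div_pos (mul_pos (mul_pos hb1 hgap) ha) (by positivity)
    obtain ⟨βF, hβF_def⟩ : ∃ b, b = (βM/(βM+MT))*r*γ*a/μF + εF := ⟨_, rfl⟩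
    obtain ⟨TF, hTFge, hTF⟩ := sit_barrier F
      (fun t => (M t / (M t + MT)) * r * γ * A t - μF * F t)
      TM βF (μF*εF) hTM0 (by positivity) hF' hF0 (by
        intro t ht hge
        beta_reduce at hge ⊢
        have ht0 : (0:ℝ) ≤ t := le_trans hTM0 ht
        have hMt := hM0 t ht0
        have hAt := hA0 t ht0
        have hMub := hTM t ht
        have hAub := hTA t (le_trans hTMge ht)
        have hfrac : M t / (M t + MT) ≤ βM/(βM+MT) := by
          rw [div_le_div_iff₀ (by linarith only [hMt, hMTpos])
            (by linarith only [hβMpos, hMTpos])]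
          have h := mul_le_mul_of_nonneg_right hMub hMTpos.le
          nlinarith only [h, hMub, hMt, hMTpos]
        have hfrac0 : 0 ≤ M t / (M t + MT) := by positivity
        have h1 : (M t / (M t + MT)) * r * γ * A t ≤ (βM/(βM+MT)) * r * γ * a := by
          have hb : 0 ≤ βM/(βM+MT) := by positivity
          have h := mul_le_mul (mul_le_mul (mul_le_mul_of_nonneg_right hfrac hr0.le)
            le_rfl hγ.le (by positivity)) hAub hAt (by positivity)
          linarith only [h]
        have h2 : μF*βF = (βM/(βM+MT))*r*γ*a + μF*εF := by
          rw [hβF_def]; field_simp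
        have h3 := mul_le_mul_of_nonneg_left hge hμF.le
        linarith only [h1, h2, h3])
    have hTF0 : 0 ≤ TF := le_trans hTM0 hTFge
    -- the forcing estimate
    have hmm : m/(m+MT) = a/(a+k) := by
      rw [div_eq_div_iff (by linarith only [hmpos, hMTpos]) (by linarith only [ha, hk])]
      rw [hm_def, hk_def]; field_simp
    have hmid : φ*((m/(m+MT))*r*γ*a/μF) ≤ (γ+μA1)*θ*a + μA2*θ^2*a^2 := by
      rw [hmm]
      have hak : (0:ℝ) < a + k := by linarith only [ha, hk]
      have heq : φ*((a/(a+k))*r*γ*a/μF) = φ*r*γ*a^2/(μF*(a+k)) := by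
        field_simp
      rw [heq, div_le_iff₀ (by positivity)]
      exact hkey2 a ha.le
    have hfrac2 : βM/(βM+MT) ≤ m/(m+MT) + εM/MT := by
      rw [div_add_div _ _ (by linarith only [hmpos, hMTpos] : m+MT ≠ 0)
        (by linarith only [hMTpos] : MT ≠ 0),
        div_le_div_iff₀ (by linarith only [hβMpos, hMTpos]) (by positivity)]
      rw [hβM_def]
      nlinarith only [mul_nonneg (mul_nonneg hmpos.le hεM.le) hMTpos.le,
        mul_nonneg (mul_nonneg hεM.le hmpos.le) hmpos.le,
        mul_nonneg (mul_nonneg hεM.le hεM.le) hmpos.le,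
        mul_nonneg (mul_nonneg hεM.le hεM.le) hMTpos.le]
    have hforce : φ*βF ≤ (γ+μA1)*θ*a + μA2*θ^2*a^2 + (γ+μA1)*(θ'-θ)*a/2 := by
      have h2 := mul_le_mul_of_nonneg_right hfrac2
        (by positivity : (0:ℝ) ≤ r*γ*a/μF)
      have h3 := mul_le_mul_of_nonneg_left h2 hφ.le
      have h1 : φ*((βM/(βM+MT))*r*γ*a/μF) ≤
          φ*((m/(m+MT))*r*γ*a/μF) + φ*r*γ*a*εM/(μF*MT) := by
        have he : φ*((m/(m+MT) + εM/MT)*(r*γ*a/μF))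
            = φ*((m/(m+MT))*r*γ*a/μF) + φ*r*γ*a*εM/(μF*MT) := by
          field_simp
        calc φ*((βM/(βM+MT))*r*γ*a/μF) = φ*((βM/(βM+MT))*(r*γ*a/μF)) := by ring
          _ ≤ φ*((m/(m+MT) + εM/MT)*(r*γ*a/μF)) := h3
          _ = φ*((m/(m+MT))*r*γ*a/μF) + φ*r*γ*a*εM/(μF*MT) := he
      have h4 : φ*r*γ*a*εM/(μF*MT) = (γ+μA1)*(θ'-θ)*a/4 := by
        rw [hεM_def]; field_simp
      have h5 : φ*εF = (γ+μA1)*(θ'-θ)*a/4 := by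
        rw [hεF_def]; field_simp
      have h6 : φ*βF = φ*((βM/(βM+MT))*r*γ*a/μF) + φ*εF := by
        rw [hβF_def]; ring
      linarith only [hmid, h1, h4, h5, h6]
    -- barrier for A at level θ'*a
    obtain ⟨T3, hT3ge, hT3⟩ := sit_barrier A
      (fun t => φ * F t - (γ + μA1 + μA2 * A t) * A t)
      TF (θ'*a) ((γ+μA1)*(θ'-θ)*a/2) hTF0
      (by exact div_pos (mul_pos (mul_pos hb1 hgap) ha) two_pos) hA' hA0 (by
        intro t ht hge
        beta_reduce at hge ⊢
        have ht0 : (0:ℝ) ≤ t := le_trans hTF0 ht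
        have hFub := hTF t ht
        have hAt := hA0 t ht0
        have h1 : φ * F t ≤ φ * βF := mul_le_mul_of_nonneg_left hFub hφ.le
        have hx : 0 ≤ A t - θ'*a := sub_nonneg.2 hge
        have hy : 0 ≤ A t + θ'*a := by
          have := mul_pos hθ'pos ha
          linarith only [hAt, this]
        have h2 : (γ + μA1)*(θ'*a) + μA2*(θ'*a)^2 ≤ (γ + μA1 + μA2 * A t) * A t := by
          have p1 := mul_nonneg hb1.le hx
          have p2 := mul_nonneg hμA2.le (mul_nonneg hx hy)
          nlinarith only [p1, p2]
        have h7 : μA2*θ^2*a^2 ≤ μA2*θ'^2*a^2 := by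
          have p := mul_nonneg (mul_nonneg hμA2.le (by linarith only [hgap] :
            (0:ℝ) ≤ θ' - θ)) (mul_nonneg (by linarith only [hθpos, hgap] :
            (0:ℝ) ≤ θ' + θ) (sq_nonneg a))
          nlinarith only [p]
        linarith only [h1, hforce, h2, h7])
    exact ⟨T3, le_trans hTF0 hT3ge, hT3⟩
  -- iterate the contraction
  have hiter : ∀ n : ℕ, ∃ T, 0 ≤ T ∧ ∀ t, T ≤ t → A t ≤ θ'^n * a₀ := by
    intro n
    induction n with
    | zero => simpa using hstart'
    | succ n ih =>
      obtain ⟨T, hT0, hT⟩ := hstep (θ'^n * a₀) (by positivity) ih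
      exact ⟨T, hT0, fun t ht => by
        have h := hT t ht
        calc A t ≤ θ'*(θ'^n*a₀) := h
          _ = θ'^(n+1)*a₀ := by ring⟩
  have hAsmall : ∀ ε, 0 < ε → ∃ T, 0 ≤ T ∧ ∀ t, T ≤ t → A t ≤ ε := by
    intro ε hε
    obtain ⟨n, hn⟩ := exists_pow_lt_of_lt_one (div_pos hε ha₀pos) hθ'1
    obtain ⟨T, hT0, hT⟩ := hiter n
    refine ⟨T, hT0, fun t ht => le_trans (hT t ht) ?_⟩
    exact le_of_lt ((lt_div_iff₀ ha₀pos).1 hn)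
  have hMsmall : ∀ ε, 0 < ε → ∃ T, 0 ≤ T ∧ ∀ t, T ≤ t → M t ≤ ε := by
    intro ε hε
    obtain ⟨T, hT0, hT⟩ := hAsmall (μM*ε/(2*((1-r)*γ))) (by positivity)
    obtain ⟨T', hT'ge, hT'⟩ := sit_barrier M (fun t => (1 - r) * γ * A t - μM * M t)
      T ε (μM*ε/2) hT0 (by positivity) hM' hM0 (by
        intro t ht hge
        beta_reduce at hge ⊢
        have h1 : (1-r)*γ*(A t) ≤ (1-r)*γ*(μM*ε/(2*((1-r)*γ))) :=
          mul_le_mul_of_nonneg_left (hT t ht) (by positivity)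
        have h2 : (1-r)*γ*(μM*ε/(2*((1-r)*γ))) = μM*ε/2 := by field_simp
        have h3 := mul_le_mul_of_nonneg_left hge hμM.le
        linarith only [h1, h2, h3])
    exact ⟨T', le_trans hT0 hT'ge, hT'⟩
  have hFsmall : ∀ ε, 0 < ε → ∃ T, 0 ≤ T ∧ ∀ t, T ≤ t → F t ≤ ε := by
    intro ε hε
    obtain ⟨T, hT0, hT⟩ := hAsmall (μF*ε/(2*(r*γ))) (by positivity)
    obtain ⟨T', hT'ge, hT'⟩ := sit_barrier F
      (fun t => (M t / (M t + MT)) * r * γ * A t - μF * F t)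
      T ε (μF*ε/2) hT0 (by positivity) hF' hF0 (by
        intro t ht hge
        beta_reduce at hge ⊢
        have ht0 : (0:ℝ) ≤ t := le_trans hT0 ht
        have hMt := hM0 t ht0
        have hAt := hA0 t ht0
        have hfrac1 : M t / (M t + MT) ≤ 1 := by
          rw [div_le_one (by linarith only [hMt, hMTpos])]
          linarith only [hMt, hMTpos]
        have h0 : (M t / (M t + MT)) * r * γ * A t ≤ r * γ * A t := by
          have h := mul_le_mul_of_nonneg_right (mul_le_mul_of_nonneg_right
            (mul_le_mul_of_nonneg_right hfrac1 hr0.le) hγ.le) hAt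
          linarith only [h]
        have h1 : r*γ*(A t) ≤ r*γ*(μF*ε/(2*(r*γ))) :=
          mul_le_mul_of_nonneg_left (hT t ht) (by positivity)
        have h2 : r*γ*(μF*ε/(2*(r*γ))) = μF*ε/2 := by field_simp
        have h3 := mul_le_mul_of_nonneg_left hge hμF.le
        linarith only [h0, h1, h2, h3])
    exact ⟨T', le_trans hT0 hT'ge, hT'⟩
  have tend : ∀ (f : ℝ → ℝ), (∀ t, 0 ≤ t → 0 ≤ f t) →
      (∀ ε, 0 < ε → ∃ T, 0 ≤ T ∧ ∀ t, T ≤ t → f t ≤ ε) →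
      Filter.Tendsto f Filter.atTop (nhds 0) := by
    intro f hnn' hsm
    rw [tendsto_order]
    constructor
    · intro c hc
      filter_upwards [eventually_ge_atTop (0:ℝ)] with t ht
      exact lt_of_lt_of_le hc (hnn' t ht)
    · intro c hc
      obtain ⟨T, hT0, hT⟩ := hsm (c/2) (by linarith only [hc])
      filter_upwards [eventually_ge_atTop T] with t ht
      exact lt_of_le_of_lt (hT t ht) (by linarith only [hc])
  exact (tend A hA0 hAsmall).prodMk_nhds
    ((tend M hM0 hMsmall).prodMk_nhds (tend F hF0 hFsmall))
end

section
/- (Content of Lemma 3.1, case R > 1.) Assume R > 1, let k ≥ 1, let E* = (A*,M*,F*) be the positive wild equilibrium (A* = (γ+μ_{A,1})(R−1)/μ_{A,2}, M* = (1−r)γA*/μ_M, F* = rγA*/μ_F), and let Γ = [0,kA*]×[0,kM*]×[0,kF*]. Then on each face of Γ the vector field H_{M_T} (with any M_T ≥ 0) points inward: for all (A,M,F) ∈ Γ, (i) if A = 0 then φF−(γ+μ_{A,1}+μ_{A,2}A)A ≥ 0; (ii) if M = 0 then (1−r)γA−μ_M M ≥ 0; (iii) if F = 0 then (M/(M+M_T))rγA−μ_F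 F ≥ 0; (iv) if A = kA* then φF−(γ+μ_{A,1}+μ_{A,2}A)A ≤ 0; (v) if M = kM* then (1−r)γA−μ_M M ≤ 0; (vi) if F = kF* then (M/(M+M_T))rγA−μ_F F ≤ 0. -/
/-- (Content of Lemma 3.1, case `R > 1`.) On each face of the box
`Γ = [0,kA*]×[0,kM*]×[0,kF*]` (with `k ≥ 1`), the SIT vector field `H_{M_T}`
points inward. -/
theorem stmt_9 (φ γ μA1 μA2 μF μM r : ℝ)
    (hφ : 0 < φ) (hγ : 0 < γ) (hμA1 : 0 < μA1) (hμA2 : 0 < μA2)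
    (hμF : 0 < μF) (hμM : 0 < μM) (hr0 : 0 < r) (hr1 : r < 1)
    (R : ℝ) (hRdef : R = r * γ * φ / (μF * (γ + μA1))) (hR : 1 < R)
    (k : ℝ) (hk : 1 ≤ k)
    (Astar Mstar Fstar : ℝ)
    (hAs : Astar = (γ + μA1) * (R - 1) / μA2)
    (hMs : Mstar = (1 - r) * γ * Astar / μM)
    (hFs : Fstar = r * γ * Astar / μF)
    (MT : ℝ) (hMT : 0 ≤ MT)
    (A M F : ℝ)
    (hA : A ∈ Set.Icc 0 (k * Astar))
    (hM : M ∈ Set.Icc 0 (k * Mstar))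
    (hF : F ∈ Set.Icc 0 (k * Fstar)) :
    (A = 0 → 0 ≤ φ * F - (γ + μA1 + μA2 * A) * A) ∧
    (M = 0 → 0 ≤ (1 - r) * γ * A - μM * M) ∧
    (F = 0 → 0 ≤ (M / (M + MT)) * r * γ * A - μF * F) ∧
    (A = k * Astar → φ * F - (γ + μA1 + μA2 * A) * A ≤ 0) ∧
    (M = k * Mstar → (1 - r) * γ * A - μM * M ≤ 0) ∧
    (F = k * Fstar → (M / (M + MT)) * r * γ * A - μF * F ≤ 0) := by
  obtain ⟨hA0, hAk⟩ := hA
  obtain ⟨hM0, hMk⟩ := hM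
  obtain ⟨hF0, hFk⟩ := hF
  have hR1 : 0 < R - 1 := by linarith
  have hk0 : 0 < k := lt_of_lt_of_le zero_lt_one hk
  have hsum : 0 < γ + μA1 := by linarith
  have hAs0 : 0 < Astar := by
    rw [hAs]; apply div_pos _ hμA2; nlinarith
  have hμA2A : μA2 * Astar = (γ + μA1) * (R - 1) := by
    rw [hAs]; field_simp
  have hrγφ : r * γ * φ = R * (μF * (γ + μA1)) := by
    rw [hRdef]; field_simp
  have hq0 : 0 ≤ M / (M + MT) := div_nonneg hM0 (by linarith)
  have hq1 : M / (M + MT) ≤ 1 := div_le_one_of_le₀ (by linarith) (by linarith)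
  refine ⟨?_, ?_, ?_, ?_, ?_, ?_⟩
  · rintro rfl
    have : 0 ≤ φ * F := by positivity
    linarith
  · rintro rfl
    have : 0 ≤ (1 - r) * γ * A := by
      have : (0:ℝ) ≤ 1 - r := by linarith
      positivity
    linarith
  · rintro rfl
    have : 0 ≤ (M / (M + MT)) * r * γ * A :=
      mul_nonneg (mul_nonneg (mul_nonneg hq0 hr0.le) hγ.le) hA0
    linarith
  · rintro rfl
    have hFk' : μF * F ≤ k * (r * γ * Astar) := by
      rw [hFs] at hFk
      have : μF * (k * (r * γ * Astar / μF)) = k * (r * γ * Astar) := by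
        field_simp
      nlinarith [mul_le_mul_of_nonneg_left hFk hμF.le]
    have h3 : (γ + μA1 + μA2 * (k * Astar)) * (k * Astar)
        = (γ + μA1) * (1 + k * (R - 1)) * (k * Astar) := by
      linear_combination (k * k * Astar) * hμA2A
    have h5 : φ * (k * (r * γ * Astar)) = k * Astar * (R * (μF * (γ + μA1))) := by
      rw [← hrγφ]; ring
    have h6 : 0 ≤ μF * (γ + μA1) * (k * Astar) * ((k - 1) * (R - 1)) := by
      apply mul_nonneg _ (mul_nonneg (by linarith) hR1.le)
      positivity
    have h7 : μF * (φ * F) ≤ μF * ((γ + μA1 + μA2 * (k * Astar)) * (k * Astar)) := by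
      rw [h3]
      nlinarith [mul_le_mul_of_nonneg_left hFk' hφ.le]
    have := (mul_le_mul_iff_right₀ hμF).mp h7
    linarith
  · rintro rfl
    have h1 : (1 - r) * γ * A ≤ (1 - r) * γ * (k * Astar) := by
      apply mul_le_mul_of_nonneg_left hAk
      have : (0:ℝ) ≤ 1 - r := by linarith
      positivity
    rw [hMs]
    have h2 : μM * (k * ((1 - r) * γ * Astar / μM)) = k * ((1 - r) * γ * Astar) := by
      field_simp
    linarith
  · rintro rfl
    have h1 : (M / (M + MT)) * r * γ * A ≤ 1 * r * γ * A := by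
      apply mul_le_mul_of_nonneg_right _ hA0
      apply mul_le_mul_of_nonneg_right _ hγ.le
      exact mul_le_mul_of_nonneg_right hq1 hr0.le
    have h2 : r * γ * A ≤ r * γ * (k * Astar) := by
      apply mul_le_mul_of_nonneg_left hAk; positivity
    rw [hFs]
    have h3 : μF * (k * (r * γ * Astar / μF)) = k * (r * γ * Astar) := by
      field_simp
    linarith
end

section
/- (Content of Lemma 3.1, case R ≤ 1.) Assume R ≤ 1, let k > 0, and let Γ = [0,k]×[0,(1−r)γk/μ_M]×[0,rγk/μ_F]. Then on each face of Γ the vector field H_0 points inward: for all (A,M,F) ∈ Γ, (i) if A = 0 then φF−(γ+μ_{A,1}+μ_{A,2}A)A ≥ 0; (ii) if M = 0 then (1−r)γA−μ_M M ≥ 0; (iii) if F = 0 then rγA−μ_F F ≥ 0; (iv) if A = k then φF−(γ+μ_{A,1}+μ_{A,2}A)A ≤ 0; (v) if M = (1−r)γk/μ_M then (1−r)γA−μ_M M ≤ 0; (vi) if F = rγk/μ_F then rγA−μ_F F ≤ 0. -/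
/-- (Content of Lemma 3.1, case `R ≤ 1`.) On each face of the box
`Γ = [0,k]×[0,(1−r)γk/μ_M]×[0,rγk/μ_F]` (with `k > 0`), the vector field `H_0`
points inward. -/
theorem stmt_10 (φ γ μA1 μA2 μF μM r : ℝ)
    (hφ : 0 < φ) (hγ : 0 < γ) (hμA1 : 0 < μA1) (hμA2 : 0 < μA2)
    (hμF : 0 < μF) (hμM : 0 < μM) (hr0 : 0 < r) (hr1 : r < 1)
    (hR : r * γ * φ / (μF * (γ + μA1)) ≤ 1)
    (k : ℝ) (hk : 0 < k)
    (A M F : ℝ)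
    (hA : A ∈ Set.Icc 0 k)
    (hM : M ∈ Set.Icc 0 ((1 - r) * γ * k / μM))
    (hF : F ∈ Set.Icc 0 (r * γ * k / μF)) :
    (A = 0 → 0 ≤ φ * F - (γ + μA1 + μA2 * A) * A) ∧
    (M = 0 → 0 ≤ (1 - r) * γ * A - μM * M) ∧
    (F = 0 → 0 ≤ r * γ * A - μF * F) ∧
    (A = k → φ * F - (γ + μA1 + μA2 * A) * A ≤ 0) ∧
    (M = (1 - r) * γ * k / μM → (1 - r) * γ * A - μM * M ≤ 0) ∧
    (F = r * γ * k / μF → r * γ * A - μF * F ≤ 0) := by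
  obtain ⟨hA0, hAk⟩ := hA
  obtain ⟨hM0, hMk⟩ := hM
  obtain ⟨hF0, hFk⟩ := hF
  have hRγ : r * γ * φ ≤ μF * (γ + μA1) := by
    have hpos : 0 < μF * (γ + μA1) := by positivity
    have := (div_le_one hpos).mp hR
    linarith
  have hAk' : (1 - r) * γ * A ≤ (1 - r) * γ * k :=
    mul_le_mul_of_nonneg_left hAk (by nlinarith)
  have hAk'' : r * γ * A ≤ r * γ * k :=
    mul_le_mul_of_nonneg_left hAk (by positivity)
  refine ⟨?_, ?_, ?_, ?_, ?_, ?_⟩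
  · intro h; rw [h]; nlinarith
  · intro h; rw [h]
    nlinarith [mul_nonneg (mul_nonneg (by linarith : (0:ℝ) ≤ 1 - r) hγ.le) hA0]
  · intro h; rw [h]
    nlinarith [mul_nonneg (mul_nonneg hr0.le hγ.le) hA0]
  · intro h; rw [h]
    have h1 : φ * F ≤ φ * (r * γ * k / μF) :=
      mul_le_mul_of_nonneg_left hFk hφ.le
    have h2 : φ * (r * γ * k / μF) ≤ (γ + μA1) * k := by
      rw [mul_div_assoc', div_le_iff₀ hμF]
      nlinarith
    nlinarith [mul_pos hμA2 (mul_pos hk hk)]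
  · intro h; rw [h]
    have : μM * ((1 - r) * γ * k / μM) = (1 - r) * γ * k := by field_simp
    linarith
  · intro h; rw [h]
    have : μF * (r * γ * k / μF) = r * γ * k := by field_simp
    linarith
end

section
/- Assume R > 1, μ_F < μ_M, d_F ≥ d_M > 0, and μ > 0. Let σ_2 = (−(−μ²d_F+μ_F+μ_{A,1}+γ) + √Δ(μ))/2 with Δ(μ) = (−μ²d_F+μ_F+μ_{A,1}+γ)² + 4μ_F(μ_{A,1}+γ)(R−1) + 4(μ_{A,1}+γ)μ²d_F, and let σ_3 = −μ_M + μ²d_M. Then σ_2 > σ_3; in particular σ_2 exceeds both other eigenvalues σ_1 and σ_3 of the matrix ω(μ). -/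
set_option maxHeartbeats 800000


/-- If `R > 1`, `μ_F < μ_M`, `d_F ≥ d_M > 0` and `μ > 0`, then `σ₂ > σ₃`; in
particular `σ₂` exceeds both other eigenvalues `σ₁` and `σ₃` of the matrix `ω(μ)`. -/
theorem stmt_12 (φ γ μA1 μA2 μF μM r dF dM : ℝ)
    (hφ : 0 < φ) (hγ : 0 < γ) (hμA1 : 0 < μA1) (hμA2 : 0 < μA2)
    (hμF : 0 < μF) (hμM : 0 < μM) (hr0 : 0 < r) (hr1 : r < 1)
    (hFM : μF < μM) (hdM : 0 < dM) (hdFM : dM ≤ dF)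
    (R : ℝ) (hRdef : R = r * γ * φ / (μF * (γ + μA1))) (hR : 1 < R)
    (μ : ℝ) (hμ : 0 < μ)
    (Δ σ1 σ2 σ3 : ℝ)
    (hΔ : Δ = (-(μ ^ 2 * dF) + μF + μA1 + γ) ^ 2 + 4 * μF * (μA1 + γ) * (R - 1)
      + 4 * (μA1 + γ) * μ ^ 2 * dF)
    (hσ1 : σ1 = (-(-(μ ^ 2 * dF) + μF + μA1 + γ) - Real.sqrt Δ) / 2)
    (hσ2 : σ2 = (-(-(μ ^ 2 * dF) + μF + μA1 + γ) + Real.sqrt Δ) / 2)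
    (hσ3 : σ3 = -μM + μ ^ 2 * dM) :
    σ3 < σ2 ∧ σ1 < σ2 := by
  have hμ2 : 0 < μ ^ 2 := by positivity
  have hdF : 0 < dF := lt_of_lt_of_le hdM hdFM
  have hA : 0 < μA1 + γ := by linarith
  have hRm : 0 < R - 1 := by linarith
  have hΔpos : 0 < Δ := by
    rw [hΔ]
    have h1 : 0 < 4 * μF * (μA1 + γ) * (R - 1) := by positivity
    have h2 : 0 < 4 * (μA1 + γ) * μ ^ 2 * dF := by positivity
    nlinarith [sq_nonneg (-(μ ^ 2 * dF) + μF + μA1 + γ)]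
  have hs0 : 0 < Real.sqrt Δ := Real.sqrt_pos.2 hΔpos
  have hs2 : Real.sqrt Δ ^ 2 = Δ := Real.sq_sqrt hΔpos.le
  constructor
  · -- σ3 < σ2
    by_contra h
    push_neg at h
    -- h : σ2 ≤ σ3, so √Δ ≤ 2σ3 + b  where b = -(μ²dF)+μF+μA1+γ
    set b : ℝ := -(μ ^ 2 * dF) + μF + μA1 + γ with hb
    have hle : Real.sqrt Δ ≤ 2 * σ3 + b := by
      rw [hσ2] at h; linarith
    have hbpos : 0 ≤ 2 * σ3 + b := le_trans hs0.le hle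
    have hsq : Δ ≤ (2 * σ3 + b) ^ 2 := by
      rw [← hs2]; exact pow_le_pow_left₀ hs0.le hle 2
    -- this means f(σ3) ≥ 0 where f(σ) = σ² + bσ + c, c = -μF(μA1+γ)(R-1) - (μA1+γ)μ²dF
    have hfσ3 : 0 ≤ σ3 ^ 2 + b * σ3 - μF * (μA1 + γ) * (R - 1) - (μA1 + γ) * (μ ^ 2 * dF) := by
      rw [hΔ] at hsq
      nlinarith [hsq]
    -- but f(σ3) < 0
    have hdMF : μ ^ 2 * dM ≤ μ ^ 2 * dF := by nlinarith
    rcases le_or_gt 0 σ3 with h3 | h3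
    · -- σ3 ≥ 0 : σ3 + b ≤ μA1 + γ + μF - μM < μA1 + γ, σ3 < μ²dF
      have h4 : σ3 + b < μA1 + γ := by rw [hσ3, hb]; linarith
      have h5 : σ3 < μ ^ 2 * dF := by rw [hσ3]; linarith
      nlinarith [mul_nonneg h3 (le_of_lt (sub_pos.2 h4)), mul_pos hμF (mul_pos hA hRm),
        mul_lt_mul_of_pos_right h5 hA]
    · -- σ3 < 0 : σ3 * (2σ3 + b) ≤ 0
      have h6 : σ3 * (2 * σ3 + b) ≤ 0 := mul_nonpos_of_nonpos_of_nonneg h3.le hbpos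
      nlinarith [sq_nonneg σ3, mul_pos hμF (mul_pos hA hRm), mul_pos hA (mul_pos hμ2 hdF)]
  · -- σ1 < σ2
    rw [hσ1, hσ2]; linarith
end

section
/- Assume R > 1, μ_F < μ_M, d_F ≥ d_M > 0, and μ > 0. Let σ_2 be the positive root of the quadratic σ² + σ(−μ²d_F+μ_F+μ_{A,1}+γ) + μ_F(μ_{A,1}+γ)(1−R) − (μ_{A,1}+γ)μ²d_F = 0 and σ_3 = −μ_M+μ²d_M. Then σ_2 + μ_M − μ²d_M > 0 and σ_2 + μ_F − μ²d_F > 0, the vector v_0 = (1, μ_M/(σ_2+μ_M−μ²d_M), μ_F/(σ_2+μ_F−μ²d_F)) has all components strictly positive, and v_0 is an eigenvector of ω(μ) for the eigenvalue σ_2, i.e. ω(μ)·v_0 = σ_2·v_0. -/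
/-- Under the stated assumptions, `σ₂+μ_M−μ²d_M > 0`, `σ₂+μ_F−μ²d_F > 0`, the vector
`v₀ = (1, μ_M/(σ₂+μ_M−μ²d_M), μ_F/(σ₂+μ_F−μ²d_F))` is strictly positive and is an
eigenvector of `ω(μ)` for the eigenvalue `σ₂`. -/
theorem stmt_14 (φ γ μA1 μA2 μF μM r dF dM : ℝ)
    (hφ : 0 < φ) (hγ : 0 < γ) (hμA1 : 0 < μA1) (hμA2 : 0 < μA2)
    (hμF : 0 < μF) (hμM : 0 < μM) (hr0 : 0 < r) (hr1 : r < 1)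
    (hFM : μF < μM) (hdM : 0 < dM) (hdFM : dM ≤ dF)
    (R : ℝ) (hRdef : R = r * γ * φ / (μF * (γ + μA1))) (hR : 1 < R)
    (μ : ℝ) (hμ : 0 < μ)
    (σ2 σ3 : ℝ)
    (hσ2root : σ2 ^ 2 + σ2 * (-(μ ^ 2 * dF) + μF + μA1 + γ)
      + μF * (μA1 + γ) * (1 - R) - (μA1 + γ) * μ ^ 2 * dF = 0)
    (hσ2pos : 0 < σ2)
    (hσ3 : σ3 = -μM + μ ^ 2 * dM)
    (ω : Matrix (Fin 3) (Fin 3) ℝ)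
    (hω : ω = !![-(μA1 + γ), 0, R * (μA1 + γ);
                 μM, -μM + μ ^ 2 * dM, 0;
                 μF, 0, -μF + μ ^ 2 * dF])
    (v0 : Fin 3 → ℝ)
    (hv0 : v0 = ![1, μM / (σ2 + μM - μ ^ 2 * dM), μF / (σ2 + μF - μ ^ 2 * dF)]) :
    0 < σ2 + μM - μ ^ 2 * dM ∧
    0 < σ2 + μF - μ ^ 2 * dF ∧
    (∀ i : Fin 3, 0 < v0 i) ∧
    ω.mulVec v0 = σ2 • v0 := by
  have hfac : (σ2 + μA1 + γ) * (σ2 + μF - μ ^ 2 * dF) = R * μF * (μA1 + γ) := by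
    linear_combination hσ2root
  have hprod : 0 < (σ2 + μA1 + γ) * (σ2 + μF - μ ^ 2 * dF) := by
    rw [hfac]; positivity
  have hsum : 0 < σ2 + μA1 + γ := by linarith
  have hF : 0 < σ2 + μF - μ ^ 2 * dF := by
    by_contra h
    push_neg at h
    nlinarith
  have hM : 0 < σ2 + μM - μ ^ 2 * dM := by nlinarith [sq_nonneg μ]
  refine ⟨hM, hF, ?_, ?_⟩
  · intro i
    fin_cases i <;> simp [hv0] <;> positivity
  · subst hω hv0
    funext i
    fin_cases i <;>
      simp [Matrix.mulVec, dotProduct, Fin.sum_univ_succ] <;>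
      field_simp <;>
      ring_nf
    · linear_combination -hσ2root
end

section
/- Assume R > 1 and d_F > 0. Define σ_2(μ) = (−(−μ²d_F+μ_F+μ_{A,1}+γ) + √Δ(μ))/2 with Δ(μ) = (−μ²d_F+μ_F+μ_{A,1}+γ)² + 4μ_F(μ_{A,1}+γ)(R−1) + 4(μ_{A,1}+γ)μ²d_F, and Φ(μ) = σ_2(μ)/μ for μ > 0. Then Φ(μ) → +∞ as μ → 0⁺, Φ(μ) → +∞ as μ → +∞, and there exists a unique μ̄ > 0 such that Φ(μ̄) = inf{Φ(μ) : μ > 0}; moreover this infimum is positive. -/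
noncomputable def Sfun (a K L dF μ : ℝ) : ℝ :=
  (-(a - μ ^ 2 * dF) + Real.sqrt ((a - μ ^ 2 * dF) ^ 2 + (4 * K + 4 * L * (μ ^ 2 * dF)))) / 2

lemma Darg_pos (a K L dF μ : ℝ) (hK : 0 < K) (hL : 0 < L) (hdF : 0 < dF) :
    0 < (a - μ ^ 2 * dF) ^ 2 + (4 * K + 4 * L * (μ ^ 2 * dF)) := by positivity

lemma sqrt_ge_abs (a K L dF μ : ℝ) (hK : 0 < K) (hL : 0 < L) (hdF : 0 < dF) :
    |a - μ ^ 2 * dF| ≤ Real.sqrt ((a - μ ^ 2 * dF) ^ 2 + (4 * K + 4 * L * (μ ^ 2 * dF))) := by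
  rw [← Real.sqrt_sq_eq_abs]
  apply Real.sqrt_le_sqrt
  nlinarith [sq_nonneg μ, mul_nonneg (sq_nonneg μ) hdF.le]

lemma Sfun_quad (a K L dF μ : ℝ) (hK : 0 < K) (hL : 0 < L) (hdF : 0 < dF) :
    (Sfun a K L dF μ) ^ 2 + (a - μ ^ 2 * dF) * Sfun a K L dF μ - (K + L * (μ ^ 2 * dF)) = 0 := by
  have h := Real.sq_sqrt (Darg_pos a K L dF μ hK hL hdF).le
  simp only [Sfun]
  linear_combination (1 / 4) * h

lemma Sfun_pos (a K L dF μ : ℝ) (hK : 0 < K) (hL : 0 < L) (hdF : 0 < dF) :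
    0 < Sfun a K L dF μ := by
  have h1 := sqrt_ge_abs a K L dF μ hK hL hdF
  have h2 : Real.sqrt ((a - μ ^ 2 * dF) ^ 2) <
      Real.sqrt ((a - μ ^ 2 * dF) ^ 2 + (4 * K + 4 * L * (μ ^ 2 * dF))) := by
    apply Real.sqrt_lt_sqrt (sq_nonneg _)
    nlinarith [mul_nonneg (sq_nonneg μ) hdF.le]
  rw [Real.sqrt_sq_eq_abs] at h2
  have h3 := neg_abs_le (a - μ ^ 2 * dF)
  have h4 := le_abs_self (a - μ ^ 2 * dF)
  simp only [Sfun]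
  linarith

lemma Sfun_plus_A_nonneg (a K L dF μ : ℝ) (hK : 0 < K) (hL : 0 < L) (hdF : 0 < dF) :
    0 ≤ Sfun a K L dF μ + (a - μ ^ 2 * dF) := by
  have h1 := sqrt_ge_abs a K L dF μ hK hL hdF
  have h3 := neg_abs_le (a - μ ^ 2 * dF)
  simp only [Sfun]
  linarith

lemma Sfun_lower (a K L dF μ : ℝ) (ha : 0 < a) (hK : 0 < K) (hL : 0 < L) (hdF : 0 < dF) :
    min 1 (K / (1 + a)) ≤ Sfun a K L dF μ := by
  set S := Sfun a K L dF μ with hS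
  have hq := Sfun_quad a K L dF μ hK hL hdF
  have hSpos := Sfun_pos a K L dF μ hK hL hdF
  rcases le_or_gt 1 S with h | h
  · exact le_trans (min_le_left _ _) h
  · refine le_trans (min_le_right _ _) ?_
    rw [div_le_iff₀ (by linarith)]
    nlinarith [mul_nonneg (mul_nonneg (sq_nonneg μ) hdF.le) hSpos.le, sq_nonneg μ,
      mul_nonneg (sq_nonneg μ) hdF.le]

lemma Sfun_big (a K L dF μ : ℝ) (hK : 0 < K) (hL : 0 < L) (hdF : 0 < dF) :
    μ ^ 2 * dF - a ≤ Sfun a K L dF μ := by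
  have h1 := sqrt_ge_abs a K L dF μ hK hL hdF
  have h3 := neg_abs_le (a - μ ^ 2 * dF)
  simp only [Sfun]
  linarith

lemma Sfun_lt (a K L dF μ x : ℝ) (hK : 0 < K) (hL : 0 < L) (hdF : 0 < dF) (hx : 0 < x)
    (hq : 0 < x ^ 2 + (a - μ ^ 2 * dF) * x - (K + L * (μ ^ 2 * dF))) :
    Sfun a K L dF μ < x := by
  set S := Sfun a K L dF μ with hS
  have h0 := Sfun_quad a K L dF μ hK hL hdF
  have hSA := Sfun_plus_A_nonneg a K L dF μ hK hL hdF
  nlinarith [h0, hq, hSA, hx]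

lemma cubic_mid_pos (α β c δ μ1 μ2 : ℝ) (hα : α < 0) (hδ : δ < 0) (h1 : 0 < μ1)
    (h12 : μ1 < μ2)
    (e1 : α * μ1 ^ 3 + β * μ1 ^ 2 + c * μ1 + δ = 0)
    (e2 : α * μ2 ^ 3 + β * μ2 ^ 2 + c * μ2 + δ = 0) :
    0 < α * ((μ1 + μ2) / 2) ^ 3 + β * ((μ1 + μ2) / 2) ^ 2 + c * ((μ1 + μ2) / 2) + δ := by
  have h2 : 0 < μ2 := h1.trans h12
  have hd : μ2 - μ1 ≠ 0 := by linarith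
  have hB1 : α * μ1 * μ2 * (μ1 + μ2) + β * μ1 * μ2 - δ = 0 := by
    have h : (μ2 - μ1) * (α * μ1 * μ2 * (μ1 + μ2) + β * μ1 * μ2 - δ) = 0 := by
      linear_combination μ1 * e2 - μ2 * e1
    rcases mul_eq_zero.mp h with h | h
    · exact absurd h hd
    · exact h
  have hB2 : α * (μ1 ^ 2 + μ1 * μ2 + μ2 ^ 2) + β * (μ1 + μ2) + c = 0 := by
    have h : (μ2 - μ1) * (α * (μ1 ^ 2 + μ1 * μ2 + μ2 ^ 2) + β * (μ1 + μ2) + c) = 0 := by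
      linear_combination e2 - e1
    rcases mul_eq_zero.mp h with h | h
    · exact absurd h hd
    · exact h
  set m := (μ1 + μ2) / 2 with hm
  have hid : μ1 * μ2 * (α * m ^ 3 + β * m ^ 2 + c * m + δ)
      = (m - μ1) * (m - μ2) * (α * μ1 * μ2 * m + δ) := by
    linear_combination (m ^ 2 - m * (μ1 + μ2)) * hB1 + (m * μ1 * μ2) * hB2
  have hm1 : 0 < m - μ1 := by simp only [hm]; linarith
  have hm2 : m - μ2 < 0 := by simp only [hm]; linarith
  have hmpos : 0 < m := by simp only [hm]; linarith
  have hlast : α * μ1 * μ2 * m + δ < 0 := by nlinarith [mul_neg_of_neg_of_pos hα (mul_pos (mul_pos h1 h2) hmpos)]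
  have hrhs : 0 < (m - μ1) * (m - μ2) * (α * μ1 * μ2 * m + δ) := by
    apply mul_pos_of_neg_of_neg (mul_neg_of_pos_of_neg hm1 hm2) hlast
  nlinarith [mul_pos h1 h2]

open Filter Set

lemma key_lemma (a K L dF : ℝ) (ha : 0 < a) (hK : 0 < K) (hL : 0 < L) (hdF : 0 < dF)
    (Φ : ℝ → ℝ) (hΦ : ∀ μ : ℝ, Φ μ = Sfun a K L dF μ / μ) :
    Tendsto Φ (nhdsWithin 0 (Set.Ioi 0)) atTop ∧
    Tendsto Φ atTop atTop ∧
    (∃! μbar : ℝ, 0 < μbar ∧ (∀ μ : ℝ, 0 < μ → Φ μbar ≤ Φ μ) ∧ 0 < Φ μbar) := by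
  set ε := min 1 (K / (1 + a)) with hε
  have hεpos : 0 < ε := lt_min one_pos (div_pos hK (by linarith))
  have hSlow : ∀ μ : ℝ, ε ≤ Sfun a K L dF μ := fun μ => Sfun_lower a K L dF μ ha hK hL hdF
  -- Part 1 : tendsto at 0+
  have part1 : Tendsto Φ (nhdsWithin 0 (Set.Ioi 0)) atTop := by
    have hbase : Tendsto (fun μ : ℝ => ε * μ⁻¹) (nhdsWithin 0 (Set.Ioi 0)) atTop :=
      tendsto_inv_nhdsGT_zero.const_mul_atTop hεpos
    apply tendsto_atTop_mono' _ ?_ hbase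
    filter_upwards [self_mem_nhdsWithin] with μ (hμ : 0 < μ)
    rw [hΦ, ← div_eq_mul_inv]
    gcongr
    exact hSlow μ
  -- Part 2 : tendsto at infinity
  have part2 : Tendsto Φ atTop atTop := by
    have hbase : Tendsto (fun μ : ℝ => dF * μ - a) atTop atTop := by
      apply tendsto_atTop_add_const_right
      exact Tendsto.const_mul_atTop hdF tendsto_id
    apply tendsto_atTop_mono' _ ?_ hbase
    filter_upwards [eventually_ge_atTop (1 : ℝ)] with μ hμ
    have hμpos : 0 < μ := lt_of_lt_of_le one_pos hμ
    rw [hΦ, le_div_iff₀ hμpos]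
    have hbig := Sfun_big a K L dF μ hK hL hdF
    nlinarith
  refine ⟨part1, part2, ?_⟩
  -- Existence of a minimizer
  have hΦpos : ∀ μ : ℝ, 0 < μ → 0 < Φ μ := by
    intro μ hμ
    rw [hΦ]
    exact div_pos (lt_of_lt_of_le hεpos (hSlow μ)) hμ
  obtain ⟨u, hu, hIoo⟩ := mem_nhdsGT_iff_exists_Ioo_subset.mp
    (part1.eventually_ge_atTop (Φ 1 + 1))
  obtain ⟨M, hM⟩ := (part2.eventually_ge_atTop (Φ 1 + 1)).exists_forall_of_atTop
  have hu0 : (0 : ℝ) < u := hu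
  set lo := min (u / 2) 1 with hlo
  set hi := max M 1 with hhi
  have hlopos : 0 < lo := lt_min (by linarith) one_pos
  have hlohi : lo ≤ hi := le_trans (min_le_right _ _) (le_max_right _ _)
  have hone : (1 : ℝ) ∈ Icc lo hi := ⟨min_le_right _ _, le_max_right _ _⟩
  have hcont : ContinuousOn Φ (Icc lo hi) := by
    have hSc : Continuous (fun μ : ℝ => Sfun a K L dF μ) := by
      unfold Sfun; fun_prop
    have hc : ContinuousOn (fun μ : ℝ => Sfun a K L dF μ / μ) (Icc lo hi) := by
      apply ContinuousOn.div hSc.continuousOn continuousOn_id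
      intro x hx; exact ne_of_gt (lt_of_lt_of_le hlopos hx.1)
    exact hc.congr fun x _ => hΦ x
  obtain ⟨μbar, hμbarmem, hmin⟩ :=
    (isCompact_Icc).exists_isMinOn ⟨1, hone⟩ hcont
  have hμbarpos : 0 < μbar := lt_of_lt_of_le hlopos hμbarmem.1
  have hminΦ : ∀ μ : ℝ, 0 < μ → Φ μbar ≤ Φ μ := by
    intro μ hμ
    rcases le_or_gt lo μ with h1 | h1
    · rcases le_or_gt μ hi with h2 | h2
      · exact hmin ⟨h1, h2⟩
      · have : Φ 1 + 1 ≤ Φ μ := hM μ (le_of_lt (lt_of_le_of_lt (le_max_left _ _) h2))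
        have : Φ μbar ≤ Φ 1 := hmin hone
        linarith [hM μ (le_of_lt (lt_of_le_of_lt (le_max_left _ _) h2))]
    · have hμu : μ ∈ Ioo (0 : ℝ) u := ⟨hμ, lt_of_lt_of_le (lt_of_lt_of_le h1 (min_le_left _ _)) (by linarith)⟩
      have h3 : Φ 1 + 1 ≤ Φ μ := hIoo hμu
      have h4 : Φ μbar ≤ Φ 1 := hmin hone
      linarith
  -- Uniqueness
  have uniq : ∀ x1 x2 : ℝ, 0 < x1 → 0 < x2 →
      (∀ μ : ℝ, 0 < μ → Φ x1 ≤ Φ μ) → (∀ μ : ℝ, 0 < μ → Φ x2 ≤ Φ μ) → x1 < x2 → False := by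
    intro x1 x2 hx1 hx2 hmin1 hmin2 hlt
    set c := Φ x1 with hc
    have hcpos : 0 < c := hΦpos x1 hx1
    have hc2 : Φ x2 = c := le_antisymm (hmin2 x1 hx1) (hmin1 x2 hx2)
    have hS1 : Sfun a K L dF x1 = c * x1 := by
      rw [hc, hΦ x1]
      exact (div_mul_cancel₀ _ hx1.ne').symm
    have hS2 : Sfun a K L dF x2 = c * x2 := by
      rw [← hc2, hΦ x2]
      exact (div_mul_cancel₀ _ hx2.ne').symm
    have hq1 := Sfun_quad a K L dF x1 hK hL hdF
    have hq2 := Sfun_quad a K L dF x2 hK hL hdF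
    rw [hS1] at hq1
    rw [hS2] at hq2
    have e1 : (-(c * dF)) * x1 ^ 3 + (c ^ 2 - L * dF) * x1 ^ 2 + (a * c) * x1 + (-K) = 0 := by
      linear_combination hq1
    have e2 : (-(c * dF)) * x2 ^ 3 + (c ^ 2 - L * dF) * x2 ^ 2 + (a * c) * x2 + (-K) = 0 := by
      linear_combination hq2
    have hcub := cubic_mid_pos (-(c * dF)) (c ^ 2 - L * dF) (a * c) (-K) x1 x2
      (by nlinarith) (by linarith) hx1 hlt e1 e2
    set m := (x1 + x2) / 2 with hm
    have hmpos : 0 < m := by simp only [hm]; linarith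
    have hqm : 0 < (c * m) ^ 2 + (a - m ^ 2 * dF) * (c * m) - (K + L * (m ^ 2 * dF)) := by
      nlinarith [hcub]
    have hSm : Sfun a K L dF m < c * m :=
      Sfun_lt a K L dF m (c * m) hK hL hdF (mul_pos hcpos hmpos) hqm
    have : Φ m < c := by
      rw [hΦ, div_lt_iff₀ hmpos]
      linarith
    exact absurd (hmin1 m hmpos) (not_le.mpr this)
  refine ⟨μbar, ⟨hμbarpos, hminΦ, hΦpos μbar hμbarpos⟩, ?_⟩
  rintro y ⟨hy0, hymin, -⟩
  rcases lt_trichotomy y μbar with h | h | h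
  · exact absurd (uniq y μbar hy0 hμbarpos hymin hminΦ h) id
  · exact h
  · exact absurd (uniq μbar y hμbarpos hy0 hminΦ hymin h) id

/-- The wave-speed function `Φ(μ) = σ₂(μ)/μ` tends to `+∞` as `μ → 0⁺` and as
`μ → +∞`, and attains its (positive) infimum over `(0,∞)` at a unique `μ̄ > 0`. -/
theorem stmt_16 (φ γ μA1 μA2 μF μM r dF : ℝ)
    (hφ : 0 < φ) (hγ : 0 < γ) (hμA1 : 0 < μA1) (hμA2 : 0 < μA2)
    (hμF : 0 < μF) (hμM : 0 < μM) (hr0 : 0 < r) (hr1 : r < 1)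
    (hdF : 0 < dF)
    (R : ℝ) (hRdef : R = r * γ * φ / (μF * (γ + μA1))) (hR : 1 < R)
    (Φ : ℝ → ℝ)
    (hΦ : ∀ μ : ℝ, Φ μ =
      ((-(-(μ ^ 2 * dF) + μF + μA1 + γ)
          + Real.sqrt ((-(μ ^ 2 * dF) + μF + μA1 + γ) ^ 2
            + 4 * μF * (μA1 + γ) * (R - 1) + 4 * (μA1 + γ) * μ ^ 2 * dF)) / 2) / μ) :
    Filter.Tendsto Φ (nhdsWithin 0 (Set.Ioi 0)) Filter.atTop ∧
    Filter.Tendsto Φ Filter.atTop Filter.atTop ∧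
    (∃! μbar : ℝ, 0 < μbar ∧ (∀ μ : ℝ, 0 < μ → Φ μbar ≤ Φ μ) ∧ 0 < Φ μbar) := by 
  set a := μF + μA1 + γ with ha
  set K := μF * (μA1 + γ) * (R - 1) with hK
  set L := μA1 + γ with hL
  have hapos : 0 < a := by simp only [ha]; linarith
  have hKpos : 0 < K := by
    apply mul_pos (mul_pos hμF (by linarith)) (by linarith)
  have hLpos : 0 < L := by simp only [hL]; linarith
  apply key_lemma a K L dF hapos hKpos hLpos hdF Φ
  intro μ
  rw [hΦ μ]
  simp only [Sfun]
  have h1 : -(-(μ ^ 2 * dF) + μF + μA1 + γ) = -(a - μ ^ 2 * dF) := by rw [ha]; ring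
  have h2 : (-(μ ^ 2 * dF) + μF + μA1 + γ) ^ 2
      + 4 * μF * (μA1 + γ) * (R - 1) + 4 * (μA1 + γ) * μ ^ 2 * dF
      = (a - μ ^ 2 * dF) ^ 2 + (4 * K + 4 * L * (μ ^ 2 * dF)) := by
    rw [ha, hK, hL]; ring
  rw [h1, h2]
end
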